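/- arXiv:1706.06244 — 12 statements merged into one kernel-verified Lean document; each statement's English description precedes it below -/
import Mathlib

section
/- For every ρ > 0 and every a > 0, the Legendre transform of the logarithmic moment generating function of a geometric distribution of mean ρ has the explicit form: sup_{λ ∈ ℝ} { λ·a − log 𝓜_ρ(λ) } = a·log( a(1+ρ) / (ρ(1+a)) ) − log( (1+a)/(1+ρ) ). -/
/-- For every `ρ > 0` and `a > 0`, the Legendre transform of the
logarithmic moment generating function of a geometric distribution of mean `ρ`
(whose mgf is `𝓜_ρ(λ) = (1 - ρ(e^λ - 1))⁻¹` for `λ < log((1+ρ)/ρ)`, `+∞` otherwise,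
so the supremum may be taken over `λ < log((1+ρ)/ρ)`) equals
`a·log(a(1+ρ)/(ρ(1+a))) − log((1+a)/(1+ρ))`. -/
theorem legendre_transform_geometric_mgf (ρ a : ℝ) (hρ : 0 < ρ) (ha : 0 < a) :
    sSup ((fun lam : ℝ => lam * a - Real.log (1 - ρ * (Real.exp lam - 1))⁻¹) ''
        {lam : ℝ | lam < Real.log ((1 + ρ) / ρ)}) =
      a * Real.log (a * (1 + ρ) / (ρ * (1 + a))) - Real.log ((1 + a) / (1 + ρ)) := by
  have h1ρ : (0:ℝ) < 1 + ρ := by linarith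
  have h1a : (0:ℝ) < 1 + a := by linarith
  set tstar : ℝ := a * (1 + ρ) / (ρ * (1 + a)) with htstar
  have htpos : 0 < tstar := by positivity
  set L : ℝ := Real.log tstar with hLdef
  have hexpL : Real.exp L = tstar := Real.exp_log htpos
  have hLmem : L < Real.log ((1 + ρ) / ρ) := by
    apply Real.log_lt_log htpos
    rw [htstar, div_lt_div_iff₀ (by positivity) hρ]
    nlinarith
  have hustar : 1 - ρ * (tstar - 1) = (1 + ρ) / (1 + a) := by
    rw [htstar]; field_simp; ring
  have hlogstar : Real.log ((1 + ρ) / (1 + a)) = - Real.log ((1 + a) / (1 + ρ)) := by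
    rw [Real.log_div (by positivity) (by positivity),
        Real.log_div (by positivity) (by positivity)]; ring
  have hval : L * a - Real.log (1 - ρ * (Real.exp L - 1))⁻¹ =
      a * Real.log tstar - Real.log ((1 + a) / (1 + ρ)) := by
    rw [hexpL, hustar, Real.log_inv, hlogstar, hLdef]; ring
  apply IsGreatest.csSup_eq
  constructor
  · exact ⟨L, hLmem, hval⟩
  · rintro y ⟨lam, hlam, rfl⟩
    simp only
    set t := Real.exp lam with ht
    have htpos' : 0 < t := Real.exp_pos lam
    have htlt : t < (1 + ρ) / ρ := by
      have h := Real.exp_lt_exp.mpr hlam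
      rwa [Real.exp_log (by positivity)] at h
    have hupos : 0 < 1 - ρ * (t - 1) := by
      have : ρ * t < 1 + ρ := by
        have := (lt_div_iff₀ hρ).mp htlt
        nlinarith
      nlinarith
    have hustarpos : (0:ℝ) < (1 + ρ) / (1 + a) := by positivity
    have h1 : Real.log (t / tstar) ≤ t / tstar - 1 :=
      Real.log_le_sub_one_of_pos (by positivity)
    have h2 : Real.log ((1 - ρ * (t - 1)) / ((1 + ρ) / (1 + a))) ≤
        (1 - ρ * (t - 1)) / ((1 + ρ) / (1 + a)) - 1 :=
      Real.log_le_sub_one_of_pos (by positivity)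
    rw [Real.log_div htpos'.ne' htpos.ne'] at h1
    rw [Real.log_div hupos.ne' hustarpos.ne'] at h2
    have hzero : a * (t / tstar - 1) + ((1 - ρ * (t - 1)) / ((1 + ρ) / (1 + a)) - 1) = 0 := by
      rw [htstar]; field_simp; ring
    have hlam_log : lam = Real.log t := (Real.log_exp lam).symm
    have h1' : a * (Real.log t - Real.log tstar) ≤ a * (t / tstar - 1) :=
      mul_le_mul_of_nonneg_left h1 ha.le
    rw [Real.log_inv, hlam_log, hLdef]
    nlinarith [h1', h2, hzero, hlogstar]
end

section
/- Fix α > 0, ρ > 0 and a > 0. Then lim_{n → ∞} 𝓘_{ρ n^α}(a n^α) = a/ρ − log(a/ρ) − 1 = I_ρ(a); that is, the geometric large deviations rate function, evaluated along the scaling (ρ n^α, a n^α), converges as n → ∞ (n ranging over the positive integers) to the large deviations rate function of an exponential distribution of mean ρ. -/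
open Filter Real

/-- The large deviations rate function of a geometric distribution of mean `ρ`. -/
noncomputable def geomRate (ρ a : ℝ) : ℝ :=
  a * Real.log (a * (1 + ρ) / (ρ * (1 + a))) - Real.log ((1 + a) / (1 + ρ))

/-- The large deviations rate function of an exponential distribution of mean `ρ`. -/
noncomputable def expRate (ρ a : ℝ) : ℝ :=
  a / ρ - 1 - Real.log (a / ρ)

lemma aux_log_lim (c : ℝ) :
    Tendsto (fun s : ℝ => s * Real.log (1 + c / s)) atTop (nhds c) := by
  have h := tendsto_one_add_div_rpow_exp c
  have h2 : Tendsto (fun x : ℝ => Real.log ((1 + c / x) ^ x)) atTop (nhds c) := by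
    have := (Real.continuousAt_log (Real.exp_pos c).ne').tendsto.comp h
    simpa [Function.comp_def] using this
  refine h2.congr' ?_
  filter_upwards [eventually_gt_atTop (|c| + 1)] with x hx
  have hx0 : 0 < x := lt_of_le_of_lt (by positivity) hx
  have habs : |c / x| < 1 := by
    rw [abs_div, abs_of_pos hx0, div_lt_one hx0]
    linarith [abs_nonneg c]
  have hpos : 0 < 1 + c / x := by
    have := neg_lt_of_abs_lt habs
    linarith
  rw [Real.log_rpow hpos]

lemma aux_main (ρ a : ℝ) (hρ : 0 < ρ) (ha : 0 < a) :
    Tendsto (fun t : ℝ => geomRate (ρ * t) (a * t)) atTop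
      (nhds (a / ρ - Real.log (a / ρ) - 1)) := by
  set c : ℝ := a / ρ - 1 with hc
  have hat : Tendsto (fun t : ℝ => 1 + a * t) atTop atTop := by
    apply tendsto_atTop_add_const_left
    exact tendsto_id.const_mul_atTop ha
  -- term1 : a*t/(1+a*t) → 1
  have term1 : Tendsto (fun t : ℝ => a * t / (1 + a * t)) atTop (nhds 1) := by
    have hinv : Tendsto (fun t : ℝ => 1 / (1 + a * t)) atTop (nhds 0) := by
      simpa [one_div, Function.comp_def] using tendsto_inv_atTop_zero.comp hat
    have : Tendsto (fun t : ℝ => 1 - 1 / (1 + a * t)) atTop (nhds (1 - 0)) :=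
      tendsto_const_nhds.sub hinv
    rw [sub_zero] at this
    refine this.congr' ?_
    filter_upwards [hat.eventually_gt_atTop 0] with t ht
    field_simp
    ring
  -- term2 : (1+a*t) * log(1 + c/(1+a*t)) → c
  have term2 : Tendsto (fun t : ℝ => (1 + a * t) * Real.log (1 + c / (1 + a * t)))
      atTop (nhds c) := (aux_log_lim c).comp hat
  -- term3 : log((1+a*t)/(1+ρ*t)) → log(a/ρ)
  have term3 : Tendsto (fun t : ℝ => Real.log ((1 + a * t) / (1 + ρ * t))) atTop
      (nhds (Real.log (a / ρ))) := by
    have hnum : Tendsto (fun t : ℝ => 1 / t + a) atTop (nhds a) := by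
      have := (tendsto_inv_atTop_zero (𝕜 := ℝ)).add (tendsto_const_nhds (x := a))
      simpa [one_div] using this
    have hden : Tendsto (fun t : ℝ => 1 / t + ρ) atTop (nhds ρ) := by
      have := (tendsto_inv_atTop_zero (𝕜 := ℝ)).add (tendsto_const_nhds (x := ρ))
      simpa [one_div] using this
    have hdiv : Tendsto (fun t : ℝ => (1 / t + a) / (1 / t + ρ)) atTop (nhds (a / ρ)) :=
      hnum.div hden hρ.ne'
    have hlog : Tendsto (fun t : ℝ => Real.log ((1 / t + a) / (1 / t + ρ))) atTop
        (nhds (Real.log (a / ρ))) :=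
      ((Real.continuousAt_log (div_pos ha hρ).ne').tendsto.comp hdiv)
    refine hlog.congr' ?_
    filter_upwards [eventually_gt_atTop (0 : ℝ)] with t ht
    congr 1
    rw [div_eq_div_iff] <;> [skip; positivity; positivity]
    field_simp
  have hcomb : Tendsto
      (fun t : ℝ => (a * t / (1 + a * t)) * ((1 + a * t) * Real.log (1 + c / (1 + a * t)))
        - Real.log ((1 + a * t) / (1 + ρ * t))) atTop
      (nhds (1 * c - Real.log (a / ρ))) := (term1.mul term2).sub term3
  have hval : 1 * c - Real.log (a / ρ) = a / ρ - Real.log (a / ρ) - 1 := by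
    rw [hc]; ring
  rw [hval] at hcomb
  refine hcomb.congr' ?_
  filter_upwards [eventually_gt_atTop (0 : ℝ)] with t ht
  have h1 : (0:ℝ) < 1 + a * t := by positivity
  unfold geomRate
  have harg : 1 + c / (1 + a * t) = a * t * (1 + ρ * t) / (ρ * t * (1 + a * t)) := by
    rw [hc]
    field_simp
    ring
  rw [harg]
  field_simp

/-- for `α > 0`, `ρ > 0`, `a > 0`, the geometric rate function evaluated
along the scaling `(ρ n^α, a n^α)` converges, as `n → ∞`, to the rate function of an
exponential distribution of mean `ρ`, namely `a/ρ − log(a/ρ) − 1`. -/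
theorem geomRate_tendsto_expRate (α ρ a : ℝ) (hα : 0 < α) (hρ : 0 < ρ) (ha : 0 < a) :
    Filter.Tendsto
      (fun n : ℕ => geomRate (ρ * (n : ℝ) ^ α) (a * (n : ℝ) ^ α))
      Filter.atTop
      (nhds (a / ρ - Real.log (a / ρ) - 1)) := by
  have hpow : Tendsto (fun n : ℕ => ((n : ℝ)) ^ α) atTop atTop :=
    (tendsto_rpow_atTop hα).comp tendsto_natCast_atTop_atTop
  exact (aux_main ρ a hρ ha).comp hpow
end

section
/- Fix α > 0 and n a positive integer. For every ρ > 0 and every a with 0 < a ≤ ρ, one has 𝓘_{ρ n^α}(a n^α) ≥ I_ρ(a) − (a − ρ)² / ( a ρ (1 + ρ n^α) ). -/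
/-- for `α > 0`, `n` a positive integer, `ρ > 0` and `0 < a ≤ ρ`,
`𝓘_{ρ n^α}(a n^α) ≥ I_ρ(a) − (a − ρ)² / (a ρ (1 + ρ n^α))`. -/
theorem geomRate_lower_bound_lower_tail (α : ℝ) (hα : 0 < α) (n : ℕ) (hn : 0 < n)
    (ρ a : ℝ) (hρ : 0 < ρ) (ha : 0 < a) (haρ : a ≤ ρ) :
    geomRate (ρ * (n : ℝ) ^ α) (a * (n : ℝ) ^ α) ≥
      expRate ρ a - (a - ρ) ^ 2 / (a * ρ * (1 + ρ * (n : ℝ) ^ α)) := by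
  set N := (n : ℝ) ^ α with hNdef
  have hN : 0 < N := Real.rpow_pos_of_pos (by exact_mod_cast hn) α
  have h1A : (0:ℝ) < 1 + a * N := by positivity
  have h1R : (0:ℝ) < 1 + ρ * N := by positivity
  set x := a * (1 + ρ * N) / (ρ * (1 + a * N)) with hx
  have hxpos : 0 < x := by positivity
  have hlog : 1 - x⁻¹ ≤ Real.log x := Real.one_sub_inv_le_log_of_pos hxpos
  have hxinv : x⁻¹ = ρ * (1 + a * N) / (a * (1 + ρ * N)) := by
    rw [hx, inv_div]
  have harg : a * N * (1 + ρ * N) / (ρ * N * (1 + a * N)) = x := by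
    rw [hx]; field_simp
  have hlogx : Real.log ((1 + a * N) / (1 + ρ * N)) = Real.log (a / ρ) - Real.log x := by
    rw [hx, Real.log_div (by positivity) (by positivity),
      Real.log_div (by positivity) (by positivity),
      Real.log_div (by positivity) (by positivity),
      Real.log_mul (by positivity) (by positivity),
      Real.log_mul (by positivity) (by positivity)]
    ring
  unfold geomRate expRate
  rw [harg, hlogx]
  have key : (a * N + 1) * (1 - x⁻¹) =
      a / ρ - 1 - (a - ρ) ^ 2 / (a * ρ * (1 + ρ * N)) := by
    rw [hxinv]
    field_simp
    ring
  have h2 : (a * N + 1) * (1 - x⁻¹) ≤ (a * N + 1) * Real.log x := by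
    have : (0:ℝ) < a * N + 1 := by positivity
    nlinarith
  linarith [h2, key.symm.le]
end

section
/- Fix α > 0 and positive integers n and ℓ. Let ρ_1, …, ρ_ℓ be positive real numbers and let X_1, …, X_ℓ be independent random variables such that X_i has distribution Geom( ρ_i n^α / (1 + ρ_i n^α) ), i.e. geometric with mean ρ_i n^α. Set S = X_1 + ⋯ + X_ℓ and ρ⁺ = max{ρ_1, …, ρ_ℓ}. Then for every a ≥ ρ⁺, (1/ℓ)·log P( S ≥ ℓ a n^α ) ≤ − I_{ρ⁺}(a) + (a/n^α)·( 1/ρ⁺ − 1/a )². -/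
open MeasureTheory ProbabilityTheory

lemma geom_pow_integral {Ω : Type*} [MeasurableSpace Ω] (μ : Measure Ω) [IsProbabilityMeasure μ]
    (X : Ω → ℕ) (hX : Measurable X) (θ : ℝ) (hθ0 : 0 ≤ θ)
    (u : ℝ) (hu1 : 1 ≤ u) (huθ : u * θ < 1)
    (hgeom : ∀ k, μ {ω | X ω = k} = ENNReal.ofReal ((1 - θ) * θ ^ k)) :
    Integrable (fun ω => u ^ (X ω)) μ ∧
      ∫ ω, u ^ (X ω) ∂μ = (1 - θ) / (1 - u * θ) := by
  have hu0 : 0 < u := lt_of_lt_of_le one_pos hu1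
  have hθ1 : θ < 1 := by nlinarith
  have huθ0 : 0 ≤ u * θ := mul_nonneg hu0.le hθ0
  set ν : Measure ℕ := μ.map X with hν
  have hνk : ∀ k, ν {k} = ENNReal.ofReal ((1 - θ) * θ ^ k) := by
    intro k
    rw [hν, Measure.map_apply hX (measurableSet_singleton k)]
    have : X ⁻¹' {k} = {ω | X ω = k} := rfl
    rw [this, hgeom]
  have hterm : ∀ k : ℕ, (1 - θ) * θ ^ k * u ^ k = (1 - θ) * (u * θ) ^ k := by
    intro k; rw [mul_pow]; ring
  have hsum : Summable (fun k : ℕ => (1 - θ) * (u * θ) ^ k) :=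
    (summable_geometric_of_lt_one huθ0 huθ).mul_left _
  have htsum : ∑' k : ℕ, (1 - θ) * (u * θ) ^ k = (1 - θ) * (1 - u * θ)⁻¹ := by
    rw [tsum_mul_left, tsum_geometric_of_lt_one huθ0 huθ]
  have hmeasf : Measurable (fun ω => u ^ (X ω)) :=
    (measurable_from_top (f := fun k : ℕ => u ^ k)).comp hX
  have hint : Integrable (fun ω => u ^ (X ω)) μ := by
    refine ⟨hmeasf.aestronglyMeasurable, ?_⟩
    rw [HasFiniteIntegral]
    have hmap : ∫⁻ a, ‖u ^ X a‖ₑ ∂μ = ∫⁻ k, ‖u ^ k‖ₑ ∂ν :=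
      (lintegral_map (measurable_from_top (f := fun k : ℕ => ‖u ^ k‖ₑ)) hX).symm
    rw [hmap, lintegral_countable' (fun k : ℕ => ‖u ^ k‖ₑ)]
    have : ∀ k : ℕ, ‖u ^ k‖ₑ * ν {k}
        = ENNReal.ofReal ((1 - θ) * (u * θ) ^ k) := by
      intro k
      rw [Real.enorm_eq_ofReal (by positivity), hνk, ← ENNReal.ofReal_mul (by positivity)]
      rw [← hterm k]
      congr 1
      ring
    simp_rw [this]
    rw [← ENNReal.ofReal_tsum_of_nonneg (fun k => mul_nonneg (by linarith) (pow_nonneg huθ0 k)) hsum]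
    exact ENNReal.ofReal_lt_top
  refine ⟨hint, ?_⟩
  have hintν : Integrable (fun k : ℕ => u ^ k) ν := by
    rwa [hν, integrable_map_measure (measurable_from_top (f := fun k : ℕ => u ^ k)).aestronglyMeasurable hX.aemeasurable]
  calc ∫ ω, u ^ (X ω) ∂μ = ∫ k, u ^ k ∂ν := by
        rw [hν, integral_map hX.aemeasurable
          (measurable_from_top (f := fun k : ℕ => u ^ k)).aestronglyMeasurable]
    _ = ∑' k : ℕ, (ν {k}).toReal • u ^ k := integral_countable' hintν
    _ = ∑' k : ℕ, (1 - θ) * (u * θ) ^ k := by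
        congr 1 with k
        rw [hνk, ENNReal.toReal_ofReal (mul_nonneg (by linarith) (pow_nonneg hθ0 k)), smul_eq_mul, ← hterm k]
    _ = (1 - θ) * (1 - u * θ)⁻¹ := htsum
    _ = (1 - θ) / (1 - u * θ) := by rw [div_eq_mul_inv]


lemma analytic_step (r A : ℝ) (hr : 0 < r) (hrA : r ≤ A) :
    -Real.log (A * (1 + r) / (r * (1 + A))) * A + Real.log ((1 + A) / (1 + r))
      ≤ -(A / r - 1 - Real.log (A / r)) + (A - r) ^ 2 / (r ^ 2 * A) := by
  have hA : 0 < A := lt_of_lt_of_le hr hrA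
  have h1r : 0 < 1 + r := by linarith
  have h1A : 0 < 1 + A := by linarith
  set t : ℝ := A * (1 + r) / (r * (1 + A)) with ht_def
  have ht0 : 0 < t := by positivity
  have hQpos : 0 < (1 + A) / (1 + r) := by positivity
  have htinv : t⁻¹ = r * (1 + A) / (A * (1 + r)) := by
    rw [ht_def, inv_div]
  have hlb : 1 - t⁻¹ ≤ Real.log t := by
    have h := Real.log_le_sub_one_of_pos (inv_pos.2 ht0)
    rw [Real.log_inv] at h
    linarith
  have hGsplit : Real.log (A / r) = Real.log t + Real.log ((1 + A) / (1 + r)) := by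
    rw [← Real.log_mul (ne_of_gt ht0) (ne_of_gt hQpos)]
    congr 1
    rw [ht_def]
    field_simp
  have key : -(A / r) + 1 + (A + 1) * (1 - r * (1 + A) / (A * (1 + r)))
      + (A - r) ^ 2 / (r ^ 2 * A) = (A - r) ^ 2 / (r ^ 2 * A * (1 + r)) := by
    field_simp
    ring
  have key2 : 0 ≤ -(A / r) + 1 + (A + 1) * (1 - t⁻¹) + (A - r) ^ 2 / (r ^ 2 * A) := by
    rw [htinv, key]
    positivity
  have hmul : (A + 1) * (1 - t⁻¹) ≤ (A + 1) * Real.log t :=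
    mul_le_mul_of_nonneg_left hlb (by linarith)
  linarith [hGsplit, key2, hmul]

/-- concentration inequality (upper tail).  Let `X_1, …, X_ℓ` be independent,
`X_i` geometric (on `ℕ₀`, i.e. `P(X_i = k) = (1-θ_i) θ_i^k`) with mean `ρ_i n^α`, i.e. with
success parameter `θ_i = ρ_i n^α / (1 + ρ_i n^α)`.  With `S = X_1 + ⋯ + X_ℓ` and
`ρ⁺ = max ρ_i`, for every `a ≥ ρ⁺`,
`(1/ℓ) log P(S ≥ ℓ a n^α) ≤ − I_{ρ⁺}(a) + (a/n^α) (1/ρ⁺ − 1/a)²`. -/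
theorem geom_sum_upper_tail_concentration
    {Ω : Type*} [MeasurableSpace Ω] (μ : Measure Ω) [IsProbabilityMeasure μ]
    (α : ℝ) (hα : 0 < α) (n ℓ : ℕ) (hn : 0 < n) (hℓ : 0 < ℓ)
    (ρ : Fin ℓ → ℝ) (hρ : ∀ i, 0 < ρ i)
    (X : Fin ℓ → Ω → ℕ) (hmeas : ∀ i, Measurable (X i))
    (hindep : iIndepFun X μ)
    (hgeom : ∀ i k, μ {ω | X i ω = k} =
      ENNReal.ofReal
        ((1 - ρ i * (n : ℝ) ^ α / (1 + ρ i * (n : ℝ) ^ α)) *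
          (ρ i * (n : ℝ) ^ α / (1 + ρ i * (n : ℝ) ^ α)) ^ k))
    (ρplus : ℝ) (hρplus : IsGreatest (Set.range ρ) ρplus)
    (a : ℝ) (ha : ρplus ≤ a) :
    (1 / (ℓ : ℝ)) *
        Real.log (μ {ω | (ℓ : ℝ) * a * (n : ℝ) ^ α ≤ ∑ i, (X i ω : ℝ)}).toReal ≤
      - expRate ρplus a + a / (n : ℝ) ^ α * (1 / ρplus - 1 / a) ^ 2 := by
  classical
  set m : ℝ := (n : ℝ) ^ α with hm_def
  have hm : 0 < m := Real.rpow_pos_of_pos (by exact_mod_cast hn) α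
  obtain ⟨hmem, hub⟩ := hρplus
  obtain ⟨i₀, hi₀⟩ := hmem
  have hρplus_pos : 0 < ρplus := hi₀ ▸ hρ i₀
  have ha_pos : 0 < a := lt_of_lt_of_le hρplus_pos ha
  set r : ℝ := ρplus * m with hr_def
  set A : ℝ := a * m with hA_def
  have hr : 0 < r := mul_pos hρplus_pos hm
  have hA : 0 < A := mul_pos ha_pos hm
  have hrA : r ≤ A := mul_le_mul_of_nonneg_right ha hm.le
  have h1r : 0 < 1 + r := by linarith
  have h1A : 0 < 1 + A := by linarith
  set t : ℝ := A * (1 + r) / (r * (1 + A)) with ht_def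
  have ht0 : 0 < t := by positivity
  have ht1 : 1 ≤ t := by
    rw [ht_def, le_div_iff₀ (by positivity)]
    nlinarith
  set lam : ℝ := Real.log t with hlam_def
  have hexp : Real.exp lam = t := Real.exp_log ht0
  have hlam : 0 ≤ lam := Real.log_nonneg ht1
  set Q : ℝ := (1 + A) / (1 + r) with hQ_def
  have hQpos : 0 < Q := by positivity
  set Y : Fin ℓ → Ω → ℝ := fun i ω => (X i ω : ℝ) with hY_def
  have hYmeas : ∀ i, Measurable (Y i) := fun i =>
    (measurable_from_top (f := fun k : ℕ => (k : ℝ))).comp (hmeas i)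
  -- per-coordinate facts
  have hri_pos : ∀ i : Fin ℓ, 0 < ρ i * m := fun i => mul_pos (hρ i) hm
  have hri_le : ∀ i : Fin ℓ, ρ i * m ≤ r := fun i =>
    mul_le_mul_of_nonneg_right (hub ⟨i, rfl⟩) hm.le
  have hθ0 : ∀ i : Fin ℓ, 0 ≤ ρ i * m / (1 + ρ i * m) := fun i => by
    have := hri_pos i; positivity
  have htθ : ∀ i : Fin ℓ, t * (ρ i * m / (1 + ρ i * m)) < 1 := by
    intro i
    have h1 := hri_pos i
    have h2 := hri_le i
    rw [ht_def, div_mul_div_comm, div_lt_one (by positivity)]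
    nlinarith
  have hexp_pow : ∀ i : Fin ℓ, (fun ω => Real.exp (lam * Y i ω)) = fun ω => t ^ (X i ω) := by
    intro i
    funext ω
    rw [hY_def]
    rw [mul_comm, Real.exp_nat_mul, hexp]
  have hgpi := fun i : Fin ℓ =>
    geom_pow_integral μ (X i) (hmeas i) (ρ i * m / (1 + ρ i * m)) (hθ0 i) t ht1 (htθ i)
      (fun k => hgeom i k)
  have hint : ∀ i : Fin ℓ, Integrable (fun ω => Real.exp (lam * Y i ω)) μ := by
    intro i
    rw [hexp_pow i]
    exact (hgpi i).1
  have hmgf : ∀ i : Fin ℓ, mgf (Y i) μ lam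
      = (1 - ρ i * m / (1 + ρ i * m)) / (1 - t * (ρ i * m / (1 + ρ i * m))) := by
    intro i
    have : mgf (Y i) μ lam = ∫ ω, Real.exp (lam * Y i ω) ∂μ := rfl
    rw [this, hexp_pow i]
    exact (hgpi i).2
  have hmgf_le : ∀ i : Fin ℓ, mgf (Y i) μ lam ≤ Q := by
    intro i
    rw [hmgf i, hQ_def]
    have h1 := hri_pos i
    have h2 := hri_le i
    have h3 := htθ i
    have hd : 0 < 1 - t * (ρ i * m / (1 + ρ i * m)) := by linarith
    rw [div_le_div_iff₀ hd (by positivity)]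
    rw [ht_def] at *
    have h1ri : 0 < 1 + ρ i * m := by linarith
    field_simp
    nlinarith [mul_nonneg (mul_nonneg (mul_nonneg h1A.le h1ri.le) (sub_nonneg.2 h2))
      (sub_nonneg.2 hrA)]
  -- independence
  have hindepY : iIndepFun Y μ :=
    hindep.comp (fun _ => ((↑) : ℕ → ℝ)) (fun _ => measurable_from_top)
  have hS_int : Integrable (fun ω => Real.exp (lam * (∑ i, Y i) ω)) μ :=
    hindepY.integrable_exp_mul_sum hYmeas (fun i _ => hint i)
  have hchern := measure_ge_le_exp_mul_mgf (X := ∑ i, Y i) (μ := μ)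
    ((ℓ : ℝ) * a * m) hlam hS_int
  rw [hindepY.mgf_sum hYmeas] at hchern
  have hset : {ω | (ℓ : ℝ) * a * m ≤ ∑ i, (X i ω : ℝ)}
      = {ω | (ℓ : ℝ) * a * m ≤ (∑ i, Y i) ω} := by
    ext ω
    simp [hY_def, Finset.sum_apply]
  rw [← hset] at hchern
  -- positivity of the probability
  obtain ⟨K, hK⟩ := exists_nat_ge ((ℓ : ℝ) * a * m)
  have hsub : {ω | X i₀ ω = K} ⊆ {ω | (ℓ : ℝ) * a * m ≤ ∑ i, (X i ω : ℝ)} := by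
    intro ω hω
    simp only [Set.mem_setOf_eq] at hω ⊢
    have h1 : (K : ℝ) ≤ ∑ i, (X i ω : ℝ) :=
      calc (K : ℝ) = (X i₀ ω : ℝ) := by rw [hω]
        _ ≤ ∑ i, (X i ω : ℝ) := Finset.single_le_sum
            (f := fun i => (X i ω : ℝ)) (fun i _ => by positivity) (Finset.mem_univ i₀)
    linarith
  have hP0 : 0 < μ {ω | (ℓ : ℝ) * a * m ≤ ∑ i, (X i ω : ℝ)} := by
    refine lt_of_lt_of_le ?_ (measure_mono hsub)
    rw [hgeom i₀ K]
    apply ENNReal.ofReal_pos.2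
    have h1 := hri_pos i₀
    have h1ri : 0 < 1 + ρ i₀ * m := by linarith
    have hθlt : ρ i₀ * m / (1 + ρ i₀ * m) < 1 := by
      rw [div_lt_one h1ri]; linarith
    have hθpos : 0 < ρ i₀ * m / (1 + ρ i₀ * m) := by positivity
    have : 0 < 1 - ρ i₀ * m / (1 + ρ i₀ * m) := by linarith
    positivity
  have hPpos : 0 < (μ {ω | (ℓ : ℝ) * a * m ≤ ∑ i, (X i ω : ℝ)}).toReal :=
    ENNReal.toReal_pos (ne_of_gt hP0) (measure_ne_top μ _)
  -- combine
  have hprod_le : ∏ i, mgf (Y i) μ lam ≤ Q ^ ℓ := by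
    calc ∏ i, mgf (Y i) μ lam ≤ ∏ _i : Fin ℓ, Q :=
          Finset.prod_le_prod (fun i _ => mgf_nonneg) (fun i _ => hmgf_le i)
      _ = Q ^ ℓ := by simp
  have hchern2 : (μ {ω | (ℓ : ℝ) * a * m ≤ ∑ i, (X i ω : ℝ)}).toReal
      ≤ Real.exp (-lam * ((ℓ : ℝ) * a * m)) * Q ^ ℓ :=
    le_trans hchern (mul_le_mul_of_nonneg_left hprod_le (Real.exp_pos _).le)
  have hlog : Real.log (μ {ω | (ℓ : ℝ) * a * m ≤ ∑ i, (X i ω : ℝ)}).toReal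
      ≤ -lam * ((ℓ : ℝ) * a * m) + (ℓ : ℝ) * Real.log Q := by
    have := Real.log_le_log hPpos hchern2
    rwa [Real.log_mul (Real.exp_ne_zero _) (pow_ne_zero _ (ne_of_gt hQpos)),
      Real.log_exp, Real.log_pow] at this
  have hℓpos : (0 : ℝ) < ℓ := by exact_mod_cast hℓ
  have hstep : (1 / (ℓ : ℝ)) *
      Real.log (μ {ω | (ℓ : ℝ) * a * m ≤ ∑ i, (X i ω : ℝ)}).toReal
      ≤ -lam * A + Real.log Q := by
    have h1 : (1 / (ℓ : ℝ)) *
        Real.log (μ {ω | (ℓ : ℝ) * a * m ≤ ∑ i, (X i ω : ℝ)}).toReal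
        ≤ (1 / (ℓ : ℝ)) * (-lam * ((ℓ : ℝ) * a * m) + (ℓ : ℝ) * Real.log Q) :=
      mul_le_mul_of_nonneg_left hlog (by positivity)
    have h2 : (1 / (ℓ : ℝ)) * (-lam * ((ℓ : ℝ) * a * m) + (ℓ : ℝ) * Real.log Q)
        = -lam * A + Real.log Q := by
      rw [hA_def]
      field_simp
    linarith
  -- final analytic step
  have hfin := analytic_step r A hr hrA
  rw [← ht_def, ← hQ_def, ← hlam_def] at hfin
  have hconv : - expRate ρplus a + a / m * (1 / ρplus - 1 / a) ^ 2
      = -(A / r - 1 - Real.log (A / r)) + (A - r) ^ 2 / (r ^ 2 * A) := by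
    unfold expRate
    have he1 : a / ρplus = A / r := by
      rw [hA_def, hr_def]
      field_simp
    rw [he1]
    have he2 : a / m * (1 / ρplus - 1 / a) ^ 2 = (A - r) ^ 2 / (r ^ 2 * A) := by
      rw [hA_def, hr_def]
      field_simp
    rw [he2]
  rw [hconv]
  calc (1 / (ℓ : ℝ)) *
      Real.log (μ {ω | (ℓ : ℝ) * a * m ≤ ∑ i, (X i ω : ℝ)}).toReal
      ≤ -lam * A + Real.log Q := hstep
    _ ≤ _ := by linarith [hfin]
end

section
/- Fix α > 0 and positive integers n and ℓ. Let ρ_1, …, ρ_ℓ be positive real numbers and let X_1, …, X_ℓ be independent random variables such that X_i has distribution Geom( ρ_i n^α / (1 + ρ_i n^α) ), i.e. geometric with mean ρ_i n^α. Set S = X_1 + ⋯ + X_ℓ and ρ⁻ = min{ρ_1, …, ρ_ℓ}. Then for every a with 0 < a ≤ ρ⁻, (1/ℓ)·log P( S ≤ ℓ a n^α ) ≤ − I_{ρ⁻}(a) + (a/n^α)·( 1/ρ⁻ − 1/a )². -/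
open MeasureTheory ProbabilityTheory

lemma geom_mgf {Ω : Type*} [MeasurableSpace Ω] (μ : Measure Ω) [IsProbabilityMeasure μ]
    (X : Ω → ℕ) (hX : Measurable X) (θ : ℝ) (hθ0 : 0 ≤ θ) (hθ1 : θ < 1)
    (hpmf : ∀ k, μ {ω | X ω = k} = ENNReal.ofReal ((1 - θ) * θ ^ k))
    (t : ℝ) (ht : t ≤ 0) :
    mgf (fun ω => (X ω : ℝ)) μ t = (1 - θ) * (1 - θ * Real.exp t)⁻¹ := by
  have hcast : Measurable (fun k : ℕ => Real.exp (t * k)) := measurable_from_top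
  have hmap : IsProbabilityMeasure (μ.map X) := Measure.isProbabilityMeasure_map hX.aemeasurable
  have hle : ∀ k : ℕ, Real.exp (t * k) ≤ 1 := fun k =>
    Real.exp_le_one_iff.mpr (mul_nonpos_of_nonpos_of_nonneg ht (Nat.cast_nonneg k))
  have hint : Integrable (fun k : ℕ => Real.exp (t * k)) (μ.map X) := by
    refine (integrable_const 1).mono' hcast.aestronglyMeasurable (ae_of_all _ fun k => ?_)
    rw [Real.norm_of_nonneg (Real.exp_pos _).le]
    exact hle k
  have hν : ∀ k : ℕ, ((μ.map X) {k}).toReal = (1 - θ) * θ ^ k := by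
    intro k
    rw [Measure.map_apply hX (measurableSet_singleton k)]
    have hpre : X ⁻¹' {k} = {ω | X ω = k} := rfl
    rw [hpre, hpmf k, ENNReal.toReal_ofReal]
    exact mul_nonneg (by linarith) (pow_nonneg hθ0 k)
  have hr0 : 0 ≤ θ * Real.exp t := mul_nonneg hθ0 (Real.exp_pos _).le
  have hr1 : θ * Real.exp t < 1 :=
    lt_of_le_of_lt (mul_le_of_le_one_right hθ0 (Real.exp_le_one_iff.mpr ht)) hθ1
  calc mgf (fun ω => (X ω : ℝ)) μ t
      = ∫ k, Real.exp (t * k) ∂(μ.map X) := by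
        rw [mgf, integral_map hX.aemeasurable hcast.aestronglyMeasurable]
    _ = ∑' k : ℕ, ((μ.map X) {k}).toReal • Real.exp (t * k) := integral_countable' hint
    _ = ∑' k : ℕ, (1 - θ) * (θ * Real.exp t) ^ k := by
        congr 1 with k
        rw [smul_eq_mul, hν k, mul_comm t (k : ℝ), Real.exp_nat_mul, mul_pow, mul_assoc]
    _ = (1 - θ) * (1 - θ * Real.exp t)⁻¹ := by
        rw [tsum_mul_left, tsum_geometric_of_lt_one hr0 hr1]

/-- mgf bound for a single tilted geometric. -/
lemma geom_mgf_bound (m M mi E : ℝ) (hm : 0 < m) (hM : 0 < M) (hmM : m ≤ M)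
    (hmi : 0 < mi) (hMi : M ≤ mi) (hE : E = m * (1 + M) / (M * (1 + m))) :
    (1 - mi / (1 + mi)) * (1 - mi / (1 + mi) * E)⁻¹ ≤ (1 + m) / (1 + M) := by
  have hE0 : 0 < E := by rw [hE]; positivity
  have hE1 : E ≤ 1 := by
    rw [hE, div_le_one (by positivity)]
    nlinarith
  have h1E : 0 ≤ 1 - E := by linarith
  have h1mi : (0:ℝ) < 1 + mi := by linarith
  have hden : 0 < 1 + mi * (1 - E) := by nlinarith
  have hden2 : 0 < 1 - mi / (1 + mi) * E := by
    have hθ1 : mi / (1 + mi) < 1 := (div_lt_one h1mi).mpr (by linarith)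
    have : mi / (1 + mi) * E < 1 :=
      lt_of_le_of_lt (mul_le_of_le_one_right (by positivity) hE1) hθ1
    linarith
  have heq : (1 - mi / (1 + mi)) * (1 - mi / (1 + mi) * E)⁻¹ = (1 + mi * (1 - E))⁻¹ := by
    field_simp [hden2.ne', hden.ne', h1mi.ne']
    rw [show (1:ℝ) + mi - mi * E = 1 + mi * (1 - E) by ring, div_eq_one_iff_eq hden.ne']
    ring
  rw [heq]
  have hME : 1 + M * (1 - E) = (1 + M) / (1 + m) := by
    rw [hE]
    field_simp
    ring
  have hmono : (1 + M) / (1 + m) ≤ 1 + mi * (1 - E) := by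
    rw [← hME]
    nlinarith
  have h0 : (0:ℝ) < (1 + M) / (1 + m) := by positivity
  calc (1 + mi * (1 - E))⁻¹ ≤ ((1 + M) / (1 + m))⁻¹ := by
        exact inv_anti₀ h0 hmono
    _ = (1 + m) / (1 + M) := by rw [inv_div]

/-- the final analytic inequality. -/
lemma tilt_final_ineq (m M : ℝ) (hm : 0 < m) (hM : 0 < M) (hmM : m ≤ M) :
    -(Real.log (m * (1 + M) / (M * (1 + m)))) * m + Real.log ((1 + m) / (1 + M)) ≤
      -(m / M - 1 - Real.log (m / M)) + m * (1 / m - 1 / M) ^ 2 := by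
  set L : ℝ := Real.log (M * (1 + m) / (m * (1 + M))) with hL_def
  have hx : (0:ℝ) < M * (1 + m) / (m * (1 + M)) := by positivity
  have hneg : Real.log (m * (1 + M) / (M * (1 + m))) = -L := by
    rw [hL_def, ← Real.log_inv, inv_div]
  have hlogq : Real.log ((1 + m) / (1 + M)) = L + Real.log (m / M) := by
    have hqq : (1 + m) / (1 + M) = (M * (1 + m) / (m * (1 + M))) * (m / M) := by
      have hm1 : (0:ℝ) < 1 + m := by linarith
      have hM1 : (0:ℝ) < 1 + M := by linarith
      rw [div_mul_div_comm, div_eq_div_iff hM1.ne' (by positivity)]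
      ring
    rw [hqq, Real.log_mul hx.ne' (by positivity)]
  have hLle : L ≤ M * (1 + m) / (m * (1 + M)) - 1 := by
    rw [hL_def]
    exact Real.log_le_sub_one_of_pos hx
  have hkey : (1 + m) * L ≤ 1 - m / M + m * (1 / m - 1 / M) ^ 2 := by
    have h2 : (1 + m) * L ≤ (1 + m) * (M * (1 + m) / (m * (1 + M)) - 1) :=
      mul_le_mul_of_nonneg_left hLle (by linarith)
    refine h2.trans ?_
    have h3 : (1 + m) * (M * (1 + m) / (m * (1 + M)) - 1) =
        (1 + m) * (M - m) / (m * (1 + M)) := by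
      have hden : (0:ℝ) < m * (1 + M) := by positivity
      rw [div_sub_one hden.ne', ← mul_div_assoc]
      congr 1
      ring
    have h4 : 1 - m / M + m * (1 / m - 1 / M) ^ 2 =
        (M - m) * (m * M + M - m) / (m * M ^ 2) := by
      field_simp
      ring
    rw [h3, h4, div_le_div_iff₀ (by positivity) (by positivity)]
    nlinarith [mul_nonneg hm.le (sq_nonneg (M - m))]
  rw [hneg, hlogq]
  linarith

/-- concentration inequality (lower tail).  Let `X_1, …, X_ℓ` be independent,
`X_i` geometric (on `ℕ₀`, i.e. `P(X_i = k) = (1-θ_i) θ_i^k`) with mean `ρ_i n^α`, i.e. with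
success parameter `θ_i = ρ_i n^α / (1 + ρ_i n^α)`.  With `S = X_1 + ⋯ + X_ℓ` and
`ρ⁻ = min ρ_i`, for every `0 < a ≤ ρ⁻`,
`(1/ℓ) log P(S ≤ ℓ a n^α) ≤ − I_{ρ⁻}(a) + (a/n^α) (1/ρ⁻ − 1/a)²`. -/
theorem geom_sum_lower_tail_concentration
    {Ω : Type*} [MeasurableSpace Ω] (μ : Measure Ω) [IsProbabilityMeasure μ]
    (α : ℝ) (hα : 0 < α) (n ℓ : ℕ) (hn : 0 < n) (hℓ : 0 < ℓ)
    (ρ : Fin ℓ → ℝ) (hρ : ∀ i, 0 < ρ i)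
    (X : Fin ℓ → Ω → ℕ) (hmeas : ∀ i, Measurable (X i))
    (hindep : iIndepFun X μ)
    (hgeom : ∀ i k, μ {ω | X i ω = k} =
      ENNReal.ofReal
        ((1 - ρ i * (n : ℝ) ^ α / (1 + ρ i * (n : ℝ) ^ α)) *
          (ρ i * (n : ℝ) ^ α / (1 + ρ i * (n : ℝ) ^ α)) ^ k))
    (ρminus : ℝ) (hρminus : IsLeast (Set.range ρ) ρminus)
    (a : ℝ) (ha0 : 0 < a) (ha : a ≤ ρminus) :
    (1 / (ℓ : ℝ)) *
        Real.log (μ {ω | (∑ i, (X i ω : ℝ)) ≤ (ℓ : ℝ) * a * (n : ℝ) ^ α}).toReal ≤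
      - expRate ρminus a + a / (n : ℝ) ^ α * (1 / ρminus - 1 / a) ^ 2 := by
  have hnpow : (0:ℝ) < (n : ℝ) ^ α := Real.rpow_pos_of_pos (by exact_mod_cast hn) α
  have hρm : 0 < ρminus := lt_of_lt_of_le ha0 ha
  obtain ⟨m, hm_def⟩ : ∃ m : ℝ, m = a * (n : ℝ) ^ α := ⟨_, rfl⟩
  obtain ⟨M, hM_def⟩ : ∃ M : ℝ, M = ρminus * (n : ℝ) ^ α := ⟨_, rfl⟩
  have hm : 0 < m := hm_def ▸ mul_pos ha0 hnpow
  have hM : 0 < M := hM_def ▸ mul_pos hρm hnpow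
  have hmM : m ≤ M := by
    rw [hm_def, hM_def]
    exact mul_le_mul_of_nonneg_right ha hnpow.le
  have hmi : ∀ i, 0 < ρ i * (n : ℝ) ^ α := fun i => mul_pos (hρ i) hnpow
  have hMi : ∀ i, M ≤ ρ i * (n : ℝ) ^ α := fun i => by
    rw [hM_def]
    exact mul_le_mul_of_nonneg_right (hρminus.2 (Set.mem_range_self i)) hnpow.le
  have hθ0 : ∀ i, 0 ≤ ρ i * (n : ℝ) ^ α / (1 + ρ i * (n : ℝ) ^ α) := fun i =>
    div_nonneg (hmi i).le (by linarith [hmi i])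
  have hθ1 : ∀ i, ρ i * (n : ℝ) ^ α / (1 + ρ i * (n : ℝ) ^ α) < 1 := fun i =>
    (div_lt_one (by linarith [hmi i])).mpr (by linarith [hmi i])
  -- the exponential tilt
  obtain ⟨E, hE_def⟩ : ∃ E : ℝ, E = m * (1 + M) / (M * (1 + m)) := ⟨_, rfl⟩
  have hE0 : 0 < E := by rw [hE_def]; positivity
  have hE1 : E ≤ 1 := by
    rw [hE_def, div_le_one (by positivity)]
    nlinarith
  obtain ⟨t, ht_def⟩ : ∃ t : ℝ, t = Real.log E := ⟨_, rfl⟩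
  have ht : t ≤ 0 := ht_def ▸ Real.log_nonpos hE0.le hE1
  have hexp : Real.exp t = E := ht_def ▸ Real.exp_log hE0
  -- real-valued variables
  set Y : Fin ℓ → Ω → ℝ := fun i ω => (X i ω : ℝ) with hY_def
  have hYmeas : ∀ i, Measurable (Y i) := fun i =>
    (measurable_from_top (f := fun k : ℕ => (k : ℝ))).comp (hmeas i)
  have hYindep : iIndepFun Y μ :=
    hindep.comp (fun _ (k : ℕ) => (k : ℝ)) (fun _ => measurable_from_top)
  -- mgf of each variable
  have hmgf : ∀ i, mgf (Y i) μ t =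
      (1 - ρ i * (n : ℝ) ^ α / (1 + ρ i * (n : ℝ) ^ α)) *
        (1 - ρ i * (n : ℝ) ^ α / (1 + ρ i * (n : ℝ) ^ α) * Real.exp t)⁻¹ := fun i =>
    geom_mgf μ (X i) (hmeas i) _ (hθ0 i) (hθ1 i) (hgeom i) t ht
  obtain ⟨q, hq_def⟩ : ∃ q : ℝ, q = (1 + m) / (1 + M) := ⟨_, rfl⟩
  have hq : 0 < q := by rw [hq_def]; positivity
  have hmgf_le : ∀ i, mgf (Y i) μ t ≤ q := by
    intro i
    rw [hmgf i, hexp, hq_def]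
    exact geom_mgf_bound m M (ρ i * (n : ℝ) ^ α) E hm hM hmM (hmi i) (hMi i) hE_def
  -- Chernoff bound
  set S : Ω → ℝ := ∑ i, Y i with hS_def
  have hSapp : ∀ ω, S ω = ∑ i, (X i ω : ℝ) := by
    intro ω
    rw [hS_def, Finset.sum_apply]
  have hSeq : S = fun ω => ∑ i, (X i ω : ℝ) := funext hSapp
  have hSmeas : Measurable S := by
    rw [hSeq]
    exact Finset.measurable_sum _ (fun i _ => hYmeas i)
  have hSnonneg : ∀ ω, 0 ≤ S ω := by
    intro ω
    rw [hSapp]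
    exact Finset.sum_nonneg fun i _ => Nat.cast_nonneg _
  have hintS : Integrable (fun ω => Real.exp (t * S ω)) μ := by
    refine (integrable_const 1).mono'
      ((hSmeas.const_mul t).exp.aestronglyMeasurable) (ae_of_all _ fun ω => ?_)
    rw [Real.norm_of_nonneg (Real.exp_pos _).le]
    exact Real.exp_le_one_iff.mpr (mul_nonpos_of_nonpos_of_nonneg ht (hSnonneg ω))
  obtain ⟨ε, hε_def⟩ : ∃ ε : ℝ, ε = (ℓ : ℝ) * a * (n : ℝ) ^ α := ⟨_, rfl⟩
  have hℓR : (0:ℝ) < (ℓ : ℝ) := by exact_mod_cast hℓ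
  have hεpos : 0 < ε := by rw [hε_def]; positivity
  have hεm : ε = (ℓ : ℝ) * m := by rw [hε_def, hm_def]; ring
  have hiset : {ω | (∑ i, (X i ω : ℝ)) ≤ ε} = {ω | S ω ≤ ε} := by
    ext ω; simp [hSapp]
  have hchern : (μ {ω | S ω ≤ ε}).toReal ≤ Real.exp (-t * ε) * mgf S μ t :=
    measure_le_le_exp_mul_mgf ε ht hintS
  have hmgfS : mgf S μ t = ∏ i, mgf (Y i) μ t := hYindep.mgf_sum hYmeas Finset.univ
  have hprod : mgf S μ t ≤ q ^ ℓ := by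
    rw [hmgfS]
    calc ∏ i, mgf (Y i) μ t ≤ ∏ _i : Fin ℓ, q :=
          Finset.prod_le_prod (fun i _ => mgf_nonneg) (fun i _ => hmgf_le i)
      _ = q ^ ℓ := by rw [Finset.prod_const, Finset.card_univ, Fintype.card_fin]
  obtain ⟨P, hP_def⟩ : ∃ P : ℝ, P = (μ {ω | S ω ≤ ε}).toReal := ⟨_, rfl⟩
  have hPB : P ≤ Real.exp (-t * ε) * q ^ ℓ := by
    rw [hP_def]
    exact hchern.trans (mul_le_mul_of_nonneg_left hprod (Real.exp_pos _).le)
  -- positivity of P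
  have hPpos : 0 < P := by
    have hsub : (⋂ i, X i ⁻¹' ({0} : Set ℕ)) ⊆ {ω | S ω ≤ ε} := by
      intro ω hω
      simp only [Set.mem_iInter, Set.mem_preimage, Set.mem_singleton_iff] at hω
      have h0 : S ω = 0 := by
        rw [hSapp]
        exact Finset.sum_eq_zero fun i _ => by rw [hω i]; simp
      simp only [Set.mem_setOf_eq, h0]
      exact hεpos.le
    have hmeas0 : μ (⋂ i, X i ⁻¹' ({0} : Set ℕ)) = ∏ i, μ (X i ⁻¹' ({0} : Set ℕ)) :=
      hindep.meas_iInter fun i => ⟨{0}, measurableSet_singleton 0, rfl⟩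
    have hpos0 : 0 < μ (⋂ i, X i ⁻¹' ({0} : Set ℕ)) := by
      rw [hmeas0]
      refine CanonicallyOrderedAdd.prod_pos.mpr fun i _ => ?_
      have hpre : X i ⁻¹' ({0} : Set ℕ) = {ω | X i ω = 0} := rfl
      rw [hpre, hgeom i 0]
      refine ENNReal.ofReal_pos.mpr ?_
      have := hθ1 i
      simp only [pow_zero, mul_one]
      linarith
    have hlt : 0 < μ {ω | S ω ≤ ε} := lt_of_lt_of_le hpos0 (measure_mono hsub)
    rw [hP_def]
    exact ENNReal.toReal_pos hlt.ne' (measure_ne_top μ _)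
  -- take logs
  have hlog : Real.log P ≤ -t * ε + (ℓ : ℝ) * Real.log q := by
    have h1 : Real.log P ≤ Real.log (Real.exp (-t * ε) * q ^ ℓ) :=
      Real.log_le_log hPpos hPB
    rwa [Real.log_mul (Real.exp_ne_zero _) (pow_ne_zero _ hq.ne'), Real.log_exp,
      Real.log_pow] at h1
  have hdiv : (1 / (ℓ:ℝ)) * Real.log P ≤ -t * m + Real.log q := by
    have h2 : (1 / (ℓ:ℝ)) * Real.log P ≤ (1 / (ℓ:ℝ)) * (-t * ε + (ℓ:ℝ) * Real.log q) :=
      mul_le_mul_of_nonneg_left hlog (by positivity)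
    refine h2.trans_eq ?_
    rw [hεm]
    field_simp
  -- final analytic inequality
  have hfinal : -t * m + Real.log q ≤
      -expRate ρminus a + a / (n : ℝ) ^ α * (1 / ρminus - 1 / a) ^ 2 := by
    have hrate : expRate ρminus a = m / M - 1 - Real.log (m / M) := by
      have ham : a / ρminus = m / M := by
        rw [hm_def, hM_def, mul_div_mul_right _ _ hnpow.ne']
      rw [expRate, ham]
    have hsq : a / (n : ℝ) ^ α * (1 / ρminus - 1 / a) ^ 2 = m * (1 / m - 1 / M) ^ 2 := by
      rw [hm_def, hM_def]
      field_simp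
      ring
    rw [hrate, hsq, ht_def, hq_def, hE_def]
    exact tilt_final_ineq m M hm hM hmM
  rw [← hε_def, hiset, ← hP_def]
  exact hdiv.trans hfinal
end

section
/- Let 0 < ρ ≤ ρ⁺ and set K⁺ = (ρ⁺/ρ)². Then for every a ≥ K⁺·ρ, one has I_ρ(a) ≤ 16·K⁺·I_{ρ⁺}(a). -/
/-- let `0 < ρ ≤ ρ⁺` and `K⁺ = (ρ⁺/ρ)²`; then for every `a ≥ K⁺ ρ`,
`I_ρ(a) ≤ 16 K⁺ I_{ρ⁺}(a)`. -/
theorem expRate_comparison (ρ ρplus : ℝ) (hρ : 0 < ρ) (hρplus : ρ ≤ ρplus)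
    (a : ℝ) (ha : (ρplus / ρ) ^ 2 * ρ ≤ a) :
    expRate ρ a ≤ 16 * (ρplus / ρ) ^ 2 * expRate ρplus a := by
  have hρp : 0 < ρplus := hρ.trans_le hρplus
  set s := ρplus / ρ with hs_def
  have hs1 : (1:ℝ) ≤ s := (one_le_div hρ).mpr hρplus
  have hspos : (0:ℝ) < s := lt_of_lt_of_le one_pos hs1
  set t := a / ρplus with ht_def
  have hts : s ≤ t := by
    rw [ht_def, le_div_iff₀ hρp]
    have e : s * ρplus = s ^ 2 * ρ := by
      rw [hs_def]
      field_simp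
    rw [e]; exact ha
  have ht1 : (1:ℝ) ≤ t := hs1.trans hts
  have htpos : (0:ℝ) < t := lt_of_lt_of_le one_pos ht1
  have harho : a / ρ = s * t := by
    rw [hs_def, ht_def]
    field_simp
  set u := Real.sqrt t with hu_def
  have hu2 : u ^ 2 = t := Real.sq_sqrt htpos.le
  have hu1 : (1:ℝ) ≤ u := by
    rw [hu_def]; exact Real.one_le_sqrt.mpr ht1
  -- log bounds
  have hlog_s : 1 - 1/s ≤ Real.log s := by
    have h := Real.log_le_sub_one_of_pos (show (0:ℝ) < 1/s by positivity)
    rw [one_div, Real.log_inv] at h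
    have : (1:ℝ)/s = s⁻¹ := one_div s
    rw [this]
    linarith
  have hlog_t : Real.log t ≤ 2 * (u - 1) := by
    have h := Real.log_le_sub_one_of_pos (show (0:ℝ) < u by linarith)
    calc Real.log t = 2 * Real.log u := by
          rw [← hu2, Real.log_pow]; push_cast; ring
      _ ≤ 2 * (u - 1) := by linarith
  have h16 : (0:ℝ) ≤ 16 * s ^ 2 - 1 := by nlinarith
  -- polynomial key : (s-1)(st-1) ≤ s(16s²-1)(u-1)²
  have h1 : s * t - 1 ≤ 2 * s * (t - 1) := by nlinarith [mul_nonneg (sub_nonneg.2 hs1) (sub_nonneg.2 ht1)]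
  have h2 : (u + 1) ^ 2 ≤ 2 * (t + 1) := by nlinarith [sq_nonneg (u - 1), hu2]
  have h3 : 4 * (s - 1) * (t + 1) ≤ (16 * s ^ 2 - 1) * (t - 1) := by
    nlinarith [mul_nonneg (sub_nonneg.2 hs1) (sub_nonneg.2 ht1), sub_nonneg.2 hs1, sub_nonneg.2 ht1,
      mul_nonneg (mul_nonneg (sub_nonneg.2 hs1) hspos.le) (sub_nonneg.2 ht1)]
  have key : (s - 1) * (s * t - 1) ≤ s * (16 * s ^ 2 - 1) * (u - 1) ^ 2 := by
    have hup : (0:ℝ) < (u + 1) ^ 2 := by positivity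
    rw [← mul_le_mul_iff_of_pos_right hup]
    have e1 : s * (16 * s ^ 2 - 1) * (u - 1) ^ 2 * (u + 1) ^ 2 = s * (16 * s ^ 2 - 1) * (t - 1) ^ 2 := by
      have : (u - 1) ^ 2 * (u + 1) ^ 2 = (u ^ 2 - 1) ^ 2 := by ring
      rw [mul_assoc, this, hu2]
    rw [e1]
    have hs1' : (0:ℝ) ≤ s - 1 := sub_nonneg.2 hs1
    have ht1' : (0:ℝ) ≤ t - 1 := sub_nonneg.2 ht1
    calc (s - 1) * (s * t - 1) * (u + 1) ^ 2
        ≤ (s - 1) * (2 * s * (t - 1)) * (2 * (t + 1)) := by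
          apply mul_le_mul (mul_le_mul_of_nonneg_left h1 hs1') h2 (by positivity)
          positivity
      _ = s * (t - 1) * (4 * (s - 1) * (t + 1)) := by ring
      _ ≤ s * (t - 1) * ((16 * s ^ 2 - 1) * (t - 1)) := by
          apply mul_le_mul_of_nonneg_left h3
          have := sub_nonneg.2 ht1
          positivity
      _ = s * (16 * s ^ 2 - 1) * (t - 1) ^ 2 := by ring
  -- derived : st - t - 1 + 1/s ≤ (16s²-1)(u-1)²
  have hfin : s * t - t - 1 + 1/s ≤ (16 * s ^ 2 - 1) * (u - 1) ^ 2 := by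
    rw [← mul_le_mul_iff_of_pos_left hspos]
    have e : s * (s * t - t - 1 + 1/s) = (s - 1) * (s * t - 1) := by
      field_simp
      ring
    rw [e, ← mul_assoc]
    exact key
  have hbound : (16 * s ^ 2 - 1) * Real.log t ≤ (16 * s ^ 2 - 1) * (2 * (u - 1)) :=
    mul_le_mul_of_nonneg_left hlog_t h16
  show expRate ρ a ≤ 16 * s ^ 2 * expRate ρplus a
  rw [expRate, expRate, harho, Real.log_mul (ne_of_gt hspos) (ne_of_gt htpos), ← ht_def]
  nlinarith [hfin, hbound, hlog_s, hu2, sq_nonneg (u - 1)]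
end

section
/- Let I(x) = x − 1 − log x for x > 0 and ψ(x) = min{x, x²} for x ≥ 0. Then for every x ≥ 1, (1/4)·ψ(x − 1) ≤ I(x) ≤ ψ(x − 1). -/
lemma log_le_aux {x : ℝ} (h1 : 1 ≤ x) (h2 : x ≤ 2) :
    Real.log x ≤ x - 1 - (x - 1) ^ 2 / 4 := by
  set f : ℝ → ℝ := fun y => y - 1 - (y - 1) ^ 2 / 4 - Real.log y with hf
  have hder : ∀ y ∈ Set.Ioo (1 : ℝ) 2,
      HasDerivAt f (1 - (y - 1) / 2 - y⁻¹) y := by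
    intro y hy
    have hy0 : y ≠ 0 := by nlinarith [hy.1]
    have h1' : HasDerivAt (fun y : ℝ => y - 1 - (y - 1) ^ 2 / 4)
        (1 - (y - 1) / 2) y := by
      have : HasDerivAt (fun y : ℝ => y - 1 - (y - 1) ^ 2 / 4)
          (1 - (2 * (y - 1) ^ 1 * 1) / 4) y := by
        exact (((hasDerivAt_id y).sub_const 1).sub
          ((((hasDerivAt_id y).sub_const 1).pow 2).div_const 4))
      convert this using 1
      ring
    exact (h1'.sub (Real.hasDerivAt_log hy0))
  have hmono : MonotoneOn f (Set.Icc 1 2) := by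
    apply monotoneOn_of_deriv_nonneg (convex_Icc 1 2)
    · apply ContinuousOn.sub
      · fun_prop
      · apply Real.continuousOn_log.mono
        intro y hy
        simp only [Set.mem_compl_iff, Set.mem_singleton_iff]
        nlinarith [hy.1]
    · rw [interior_Icc]
      intro y hy
      exact ((hder y hy).differentiableAt).differentiableWithinAt
    · rw [interior_Icc]
      intro y hy
      rw [(hder y hy).deriv]
      have hy1 := hy.1
      have hy2 := hy.2
      rw [sub_nonneg]
      rw [inv_eq_one_div, div_le_iff₀ (by linarith : (0:ℝ) < y)]
      nlinarith
  have h0 : f 1 ≤ f x := hmono (by norm_num) ⟨h1, h2⟩ h1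
  simp only [hf, Real.log_one] at h0
  nlinarith [h0]

/-- with `I(x) = x − 1 − log x` and `ψ(x) = min{x, x²}`, for every `x ≥ 1`,
`(1/4) ψ(x−1) ≤ I(x) ≤ ψ(x−1)`. -/
theorem rate_function_psi_bounds (x : ℝ) (hx : 1 ≤ x) :
    (1 / 4) * min (x - 1) ((x - 1) ^ 2) ≤ x - 1 - Real.log x ∧
      x - 1 - Real.log x ≤ min (x - 1) ((x - 1) ^ 2) := by
  have hx0 : (0:ℝ) < x := by linarith
  have hlog_ub : Real.log x ≤ x - 1 := Real.log_le_sub_one_of_pos hx0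
  have hlog_lb : 1 - x⁻¹ ≤ Real.log x := Real.one_sub_inv_le_log_of_pos hx0
  constructor
  · rcases le_total x 2 with h2 | h2
    · -- min = (x-1)^2
      have hmin : min (x - 1) ((x - 1) ^ 2) = (x - 1) ^ 2 := by
        rw [min_eq_right]; nlinarith
      rw [hmin]
      have := log_le_aux hx h2
      nlinarith
    · -- min = x - 1
      have hmin : min (x - 1) ((x - 1) ^ 2) = x - 1 := by
        rw [min_eq_left]; nlinarith
      rw [hmin]
      have hlog : Real.log x = Real.log 2 + Real.log (x / 2) := by
        rw [← Real.log_mul (by norm_num) (by positivity)]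
        ring_nf
      have h2' : Real.log (x / 2) ≤ x / 2 - 1 :=
        Real.log_le_sub_one_of_pos (by positivity)
      have hl2 : Real.log 2 < 0.6931471808 := Real.log_two_lt_d9
      nlinarith
  · apply le_min
    · have := Real.log_nonneg hx
      linarith
    · have hx1 : x - 1 - Real.log x ≤ (x - 1) - (1 - x⁻¹) := by linarith
      have hxx : x * x⁻¹ = 1 := mul_inv_cancel₀ hx0.ne'
      have : (x - 1) - (1 - x⁻¹) ≤ (x - 1) ^ 2 := by
        nlinarith [hxx, sq_nonneg (x - 1), mul_nonneg (sq_nonneg (x - 1)) (sub_nonneg.2 hx)]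
      linarith
end

section
/- Let ψ(x) = min{x, x²} for x ≥ 0. Then for every λ ∈ (0,1] and every x ≥ 1/λ², one has ψ(x − 1) ≤ (4/λ²)·ψ(λ x − 1). -/
/-- with `ψ(x) = min{x, x²}`, for every `λ ∈ (0,1]` and `x ≥ 1/λ²`,
`ψ(x − 1) ≤ (4/λ²) ψ(λx − 1)`. -/
theorem psi_scaling_inequality (lam x : ℝ) (hlam0 : 0 < lam) (hlam1 : lam ≤ 1)
    (hx : 1 / lam ^ 2 ≤ x) :
    min (x - 1) ((x - 1) ^ 2) ≤
      4 / lam ^ 2 * min (lam * x - 1) ((lam * x - 1) ^ 2) := by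
  have h2 : (0:ℝ) < lam ^ 2 := by positivity
  have h1 : 1 ≤ x * lam ^ 2 := by
    have := (div_le_iff₀ h2).mp hx
    linarith
  have hx1 : 1 ≤ x := by nlinarith
  have hy : 0 ≤ lam * x - 1 := by nlinarith
  have hkey : (x - 1) * lam ≤ 2 * (lam * x - 1) := by nlinarith [sq_nonneg (1 - lam)]
  have hA : x - 1 ≤ 4 / lam ^ 2 * (lam * x - 1) := by
    rw [div_mul_eq_mul_div, le_div_iff₀ h2]
    nlinarith [sq_nonneg (1 - lam), mul_nonneg hy (sub_nonneg.mpr hlam1)]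
  have hB : (x - 1) ^ 2 ≤ 4 / lam ^ 2 * (lam * x - 1) ^ 2 := by
    rw [div_mul_eq_mul_div, le_div_iff₀ h2]
    nlinarith [mul_self_nonneg ((x-1)*lam - 2*(lam*x-1)), sub_nonneg.mpr hx1]
  calc min (x - 1) ((x - 1) ^ 2)
      ≤ min (4 / lam ^ 2 * (lam * x - 1)) (4 / lam ^ 2 * ((lam * x - 1) ^ 2)) :=
        min_le_min hA hB
    _ = 4 / lam ^ 2 * min (lam * x - 1) ((lam * x - 1) ^ 2) := by
        rw [mul_min_of_nonneg _ _ (by positivity : (0:ℝ) ≤ 4 / lam ^ 2)]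
end

section
/- Fix α ≥ 0 and a positive integer n, and define M_n(u,v) = φ_n(v) − φ_n(u) − φ_n'(u)·(v − u) for u, v ≥ 0. Then for every ε > 0 and ε₀ > 0 there exists a constant C = C(ε, ε₀) > 0 (one may take C = max{4/ε, 2/(ε₀ ε²)}), independent of n, such that |M_n(u,v)| ≤ C·I_u(v) for every u ∈ [ε, ε^{-1}] and every v ≥ ε₀. -/
/-- `φ_n(u) = n^α φ(n^α u)` with `φ(ρ) = ρ/(1+ρ)`. -/
noncomputable def phin (α : ℝ) (n : ℕ) (u : ℝ) : ℝ :=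
  (n : ℝ) ^ α * ((n : ℝ) ^ α * u / (1 + (n : ℝ) ^ α * u))

/-- The derivative `φ_n'(u) = (n^{−α} + u)^{−2}`. -/
noncomputable def phin' (α : ℝ) (n : ℕ) (u : ℝ) : ℝ :=
  (((n : ℝ) ^ (-α) + u) ^ 2)⁻¹

lemma logA {t : ℝ} (ht : 1 ≤ t) : Real.log t ≤ (t - t⁻¹) / 2 := by
  rcases eq_or_lt_of_le ht with h | h
  · simp [← h]
  · have h0 : 0 < Real.log t := Real.log_pos h
    have h1 : Real.log t < Real.sinh (Real.log t) := Real.self_lt_sinh_iff.mpr h0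
    rw [Real.sinh_log (by linarith)] at h1
    linarith

lemma logB {t : ℝ} (ht : 0 < t) (ht1 : t ≤ 1) :
    Real.log t ≤ t - 1 - (t - 1) ^ 2 / 2 := by
  have hd : ∀ x : ℝ, 0 < x → HasDerivAt (fun x : ℝ => x - 1 - (x - 1) ^ 2 / 2 - Real.log x)
      (1 - 2 * (x - 1) ^ 1 * 1 / 2 - x⁻¹) x := fun x hx0 =>
    (((hasDerivAt_id x).sub_const 1).sub
      ((((hasDerivAt_id x).sub_const 1).pow 2).div_const 2)).sub
      (Real.hasDerivAt_log hx0.ne')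
  have key : AntitoneOn (fun x : ℝ => x - 1 - (x - 1) ^ 2 / 2 - Real.log x) (Set.Icc t 1) := by
    apply antitoneOn_of_deriv_nonpos (convex_Icc t 1)
    · apply ContinuousOn.sub
      · fun_prop
      · exact fun x hx =>
          (Real.continuousAt_log (ne_of_gt (lt_of_lt_of_le ht hx.1))).continuousWithinAt
    · intro x hx
      rw [interior_Icc] at hx
      exact ((hd x (lt_trans ht hx.1)).differentiableAt).differentiableWithinAt
    · intro x hx
      rw [interior_Icc] at hx
      have hx0 : 0 < x := lt_trans ht hx.1
      rw [(hd x hx0).deriv]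
      have hmul : (1 - 2 * (x - 1) ^ 1 * 1 / 2 - x⁻¹) * x = -(x - 1) ^ 2 := by
        field_simp; ring
      nlinarith [sq_nonneg (x - 1), hx0]
  have h1 := key (Set.mem_Icc.mpr ⟨le_refl t, ht1⟩) (Set.mem_Icc.mpr ⟨ht1, le_refl 1⟩) ht1
  simp only [Real.log_one] at h1
  norm_num at h1
  linarith

set_option maxHeartbeats 1000000 in
/-- with `M_n(u,v) = φ_n(v) − φ_n(u) − φ_n'(u)(v − u)`, for every
`ε, ε₀ > 0` there is a constant `C = C(ε,ε₀) > 0` (one may take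
`C = max{4/ε, 2/(ε₀ ε²)}`), independent of `n`, with `|M_n(u,v)| ≤ C I_u(v)` for all
`u ∈ [ε, ε⁻¹]` and `v ≥ ε₀`. -/
theorem Mn_le_rate (α : ℝ) (hα : 0 ≤ α) (ε ε₀ : ℝ) (hε : 0 < ε) (hε₀ : 0 < ε₀) :
    ∃ C : ℝ, 0 < C ∧ C = max (4 / ε) (2 / (ε₀ * ε ^ 2)) ∧
      ∀ n : ℕ, 0 < n → ∀ u ∈ Set.Icc ε ε⁻¹, ∀ v : ℝ, ε₀ ≤ v →
        |phin α n v - phin α n u - phin' α n u * (v - u)| ≤ C * expRate u v := by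
  set C := max (4 / ε) (2 / (ε₀ * ε ^ 2)) with hC
  have hCpos : 0 < C := lt_max_of_lt_left (by positivity)
  refine ⟨C, hCpos, rfl, ?_⟩
  intro n hn u hu v hv
  obtain ⟨huε, huε'⟩ := hu
  have hu0 : 0 < u := lt_of_lt_of_le hε huε
  have hv0 : 0 < v := lt_of_lt_of_le hε₀ hv
  have hε1 : ε ≤ 1 := by
    nlinarith [mul_le_mul_of_nonneg_left (le_trans huε huε') hε.le,
      mul_inv_cancel₀ hε.ne']
  set A := (n : ℝ) ^ α with hA
  have hA1 : (1 : ℝ) ≤ A := Real.one_le_rpow (by exact_mod_cast hn) hα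
  have hA0 : 0 < A := lt_of_lt_of_le one_pos hA1
  -- the algebraic identity
  have hden1 : (0 : ℝ) < 1 + A * u := by positivity
  have hden2 : (0 : ℝ) < 1 + A * v := by positivity
  have hid : phin α n v - phin α n u - phin' α n u * (v - u)
      = -(A ^ 3 * (v - u) ^ 2 / ((1 + A * u) ^ 2 * (1 + A * v))) := by
    unfold phin phin'
    rw [Real.rpow_neg (by positivity)]
    rw [← hA]
    have hAiu : A⁻¹ + u ≠ 0 := by positivity
    field_simp
    ring
  rw [hid, abs_neg, abs_of_nonneg (by positivity)]
  -- bound by (v-u)^2/(u^2*v)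
  have hb1 : A ^ 3 * (v - u) ^ 2 / ((1 + A * u) ^ 2 * (1 + A * v))
      ≤ (v - u) ^ 2 / (u ^ 2 * v) := by
    have h1 : A ^ 3 * (u ^ 2 * v) ≤ (1 + A * u) ^ 2 * (1 + A * v) := by
      nlinarith [mul_pos hA0 hu0, mul_pos hA0 hv0, sq_nonneg (A*u), sq_nonneg (A*v),
        mul_pos (mul_pos hA0 hu0) (mul_pos hA0 hv0),
        mul_pos (mul_pos (mul_pos hA0 hu0) (mul_pos hA0 hu0)) (mul_pos hA0 hv0)]
    calc A ^ 3 * (v - u) ^ 2 / ((1 + A * u) ^ 2 * (1 + A * v))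
        ≤ A ^ 3 * (v - u) ^ 2 / (A ^ 3 * (u ^ 2 * v)) := by
          apply div_le_div_of_nonneg_left (by positivity) (by positivity) h1
      _ = (v - u) ^ 2 / (u ^ 2 * v) := by
          rw [mul_div_mul_left _ _ (by positivity : (A:ℝ)^3 ≠ 0)]
  refine le_trans hb1 ?_
  -- case split on u ≤ v or v ≤ u
  rcases le_total u v with huv | huv
  · -- v/u ≥ 1
    have hlog : Real.log (v / u) ≤ (v / u - (v / u)⁻¹) / 2 :=
      logA ((one_le_div hu0).mpr huv)
    have hE : (v - u) ^ 2 / (2 * u * v) ≤ expRate u v := by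
      unfold expRate
      have hinv : (v / u)⁻¹ = u / v := by rw [inv_div]
      rw [hinv] at hlog
      have heq : v / u - 1 - (v / u - u / v) / 2 = (v - u) ^ 2 / (2 * u * v) := by
        field_simp; ring
      linarith
    have hCu : 2 / u ≤ C := le_trans (by
        rw [div_le_div_iff₀ hu0 hε]; nlinarith) (le_max_left _ _)
    calc (v - u) ^ 2 / (u ^ 2 * v) = (2 / u) * ((v - u) ^ 2 / (2 * u * v)) := by
          field_simp
      _ ≤ C * expRate u v := mul_le_mul hCu hE (by positivity) hCpos.le
  · -- v ≤ u
    have hlog : Real.log (v / u) ≤ v / u - 1 - (v / u - 1) ^ 2 / 2 :=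
      logB (by positivity) ((div_le_one hu0).mpr huv)
    have hE : (v - u) ^ 2 / (2 * u ^ 2) ≤ expRate u v := by
      unfold expRate
      have h' : v / u - 1 = (v - u) / u := by field_simp
      have heq : (v / u - 1) ^ 2 / 2 = (v - u) ^ 2 / (2 * u ^ 2) := by
        rw [h', div_pow]; ring
      linarith
    have hCv : 2 / v ≤ C := by
      refine le_trans ?_ (le_max_right _ _)
      have hε2 : ε ^ 2 ≤ 1 := by nlinarith
      rw [div_le_div_iff₀ hv0 (by positivity)]
      nlinarith [mul_le_mul_of_nonneg_left hε2 hε₀.le]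
    calc (v - u) ^ 2 / (u ^ 2 * v) = (2 / v) * ((v - u) ^ 2 / (2 * u ^ 2)) := by
          field_simp
      _ ≤ C * expRate u v := mul_le_mul hCv hE (by positivity) hCpos.le
end

section
/- Fix α ≥ 0 and a positive integer n. For every initial condition u₀ : ℤ/nℤ → [0,∞) there exists a unique global solution of the discrete scheme, i.e. a unique function u : [0,∞) → (ℤ/nℤ → [0,∞)) such that u_0 = u₀ and, for every x ∈ ℤ/nℤ, the map t ↦ u_t(x) is differentiable on [0,∞) with (d/dt) u_t(x) = Δ_n( φ_n ∘ u_t )(x) for all t ≥ 0. -/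
/-- The discrete Laplacian on `ℤ/nℤ`: `Δ_n f(x) = n² (f(x+1) + f(x−1) − 2 f(x))`. -/
def discLap (n : ℕ) (f : ZMod n → ℝ) (x : ZMod n) : ℝ :=
  (n : ℝ) ^ 2 * (f (x + 1) + f (x - 1) - 2 * f x)

open Set

/-- Lipschitz, bounded extension of `ρ ↦ ρ/(1+ρ)`. -/
noncomputable def psiAux (r : ℝ) : ℝ := max r 0 / (1 + max r 0)

lemma psiAux_nonneg (r : ℝ) : 0 ≤ psiAux r := by
  unfold psiAux
  have := le_max_right r 0
  positivity

lemma psiAux_le_one (r : ℝ) : psiAux r ≤ 1 := by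
  unfold psiAux
  have h := le_max_right r 0
  rw [div_le_one (by linarith)]
  linarith

lemma psiAux_of_nonpos {r : ℝ} (hr : r ≤ 0) : psiAux r = 0 := by
  unfold psiAux
  rw [max_eq_right hr]
  simp

lemma psiAux_of_nonneg {r : ℝ} (hr : 0 ≤ r) : psiAux r = r / (1 + r) := by
  unfold psiAux
  rw [max_eq_left hr]

lemma abs_psiAux_sub (a b : ℝ) : |psiAux a - psiAux b| ≤ |a - b| := by
  unfold psiAux
  set A := max a 0 with hA
  set B := max b 0 with hB
  have hA0 : 0 ≤ A := le_max_right a 0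
  have hB0 : 0 ≤ B := le_max_right b 0
  have h1 : A / (1 + A) - B / (1 + B) = (A - B) / ((1 + A) * (1 + B)) := by
    field_simp
    ring
  rw [h1, abs_div]
  have h2 : |(1 + A) * (1 + B)| = (1 + A) * (1 + B) := abs_of_pos (by nlinarith)
  rw [h2]
  have h3 : |A - B| ≤ |a - b| := abs_max_sub_max_le_abs a b 0
  have h4 : |A - B| / ((1 + A) * (1 + B)) ≤ |A - B| := by
    apply div_le_self (abs_nonneg _)
    nlinarith
  linarith

/-- The (extended) vector field of the discrete scheme. -/
noncomputable def vf (c : ℝ) (n : ℕ) (u : ZMod n → ℝ) : ZMod n → ℝ := fun x =>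
  (n : ℝ) ^ 2 * (c * psiAux (c * u (x + 1)) + c * psiAux (c * u (x - 1))
    - 2 * (c * psiAux (c * u x)))

lemma vf_nonneg_of_nonpos {c : ℝ} (hc : 0 ≤ c) {n : ℕ} {u : ZMod n → ℝ} {x : ZMod n}
    (hx : u x ≤ 0) : 0 ≤ vf c n u x := by
  unfold vf
  have h1 : psiAux (c * u x) = 0 := psiAux_of_nonpos (mul_nonpos_of_nonneg_of_nonpos hc hx)
  rw [h1]
  have h2 := psiAux_nonneg (c * u (x + 1))
  have h3 := psiAux_nonneg (c * u (x - 1))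
  have h4 : (0:ℝ) ≤ (n : ℝ) ^ 2 := by positivity
  have h5 : 0 ≤ c * psiAux (c * u (x + 1)) + c * psiAux (c * u (x - 1))
      - 2 * (c * 0) := by
    have := mul_nonneg hc h2
    have := mul_nonneg hc h3
    linarith
  exact mul_nonneg h4 h5

lemma vf_eq_discLap {α : ℝ} (hα : 0 ≤ α) {n : ℕ} {u : ZMod n → ℝ} (hu : ∀ x, 0 ≤ u x)
    (x : ZMod n) : vf ((n : ℝ) ^ α) n u x = discLap n (fun y => phin α n (u y)) x := by
  have hc : 0 ≤ (n : ℝ) ^ α := Real.rpow_nonneg (Nat.cast_nonneg n) α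
  have key : ∀ y : ZMod n, psiAux ((n : ℝ) ^ α * u y) =
      (n : ℝ) ^ α * u y / (1 + (n : ℝ) ^ α * u y) :=
    fun y => psiAux_of_nonneg (mul_nonneg hc (hu y))
  unfold vf discLap phin
  rw [key, key, key]

lemma abs_term_le {c : ℝ} (hc : 0 ≤ c) (a b : ℝ) :
    |c * psiAux (c * a) - c * psiAux (c * b)| ≤ c ^ 2 * |a - b| := by
  have h1 : c * psiAux (c * a) - c * psiAux (c * b) = c * (psiAux (c * a) - psiAux (c * b)) := by
    ring
  rw [h1, abs_mul, abs_of_nonneg hc]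
  have h2 := abs_psiAux_sub (c * a) (c * b)
  have h3 : |c * a - c * b| = c * |a - b| := by
    rw [← mul_sub, abs_mul, abs_of_nonneg hc]
  rw [h3] at h2
  nlinarith [abs_nonneg (a - b), abs_nonneg (psiAux (c * a) - psiAux (c * b))]

lemma vf_dist_le {c : ℝ} (hc : 0 ≤ c) {n : ℕ} [NeZero n] (u v : ZMod n → ℝ) :
    dist (vf c n u) (vf c n v) ≤ ((n : ℝ) ^ 2 * (4 * c ^ 2)) * dist u v := by
  have hnn : (0:ℝ) ≤ (n : ℝ) ^ 2 * (4 * c ^ 2) * dist u v := by positivity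
  rw [dist_pi_le_iff hnn]
  intro x
  have key : ∀ y : ZMod n, |u y - v y| ≤ dist u v := by
    intro y
    have := dist_le_pi_dist u v y
    rwa [Real.dist_eq] at this
  rw [Real.dist_eq]
  have e1 := abs_term_le hc (u (x + 1)) (v (x + 1))
  have e2 := abs_term_le hc (u (x - 1)) (v (x - 1))
  have e3 := abs_term_le hc (u x) (v x)
  have k1 := key (x + 1)
  have k2 := key (x - 1)
  have k3 := key x
  have hvf : vf c n u x - vf c n v x = (n : ℝ) ^ 2 *
      ((c * psiAux (c * u (x + 1)) - c * psiAux (c * v (x + 1)))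
      + (c * psiAux (c * u (x - 1)) - c * psiAux (c * v (x - 1)))
      - 2 * (c * psiAux (c * u x) - c * psiAux (c * v x))) := by
    unfold vf; ring
  rw [hvf, abs_mul, abs_of_nonneg (by positivity : (0:ℝ) ≤ (n : ℝ) ^ 2)]
  have habs : |(c * psiAux (c * u (x + 1)) - c * psiAux (c * v (x + 1)))
      + (c * psiAux (c * u (x - 1)) - c * psiAux (c * v (x - 1)))
      - 2 * (c * psiAux (c * u x) - c * psiAux (c * v x))| ≤ 4 * c ^ 2 * dist u v := by
    have t1 : |c * psiAux (c * u (x + 1)) - c * psiAux (c * v (x + 1))| ≤ c ^ 2 * dist u v := by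
      nlinarith [sq_nonneg c]
    have t2 : |c * psiAux (c * u (x - 1)) - c * psiAux (c * v (x - 1))| ≤ c ^ 2 * dist u v := by
      nlinarith [sq_nonneg c]
    have t3 : |c * psiAux (c * u x) - c * psiAux (c * v x)| ≤ c ^ 2 * dist u v := by
      nlinarith [sq_nonneg c]
    have b1 := abs_le.mp t1
    have b2 := abs_le.mp t2
    have b3 := abs_le.mp t3
    rw [abs_le]
    constructor <;> [linarith [b1.1, b2.1, b3.2]; linarith [b1.2, b2.2, b3.1]]
  calc (n : ℝ) ^ 2 * |(c * psiAux (c * u (x + 1)) - c * psiAux (c * v (x + 1)))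
        + (c * psiAux (c * u (x - 1)) - c * psiAux (c * v (x - 1)))
        - 2 * (c * psiAux (c * u x) - c * psiAux (c * v x))|
      ≤ (n : ℝ) ^ 2 * (4 * c ^ 2 * dist u v) := by
        apply mul_le_mul_of_nonneg_left habs (by positivity)
    _ = (n : ℝ) ^ 2 * (4 * c ^ 2) * dist u v := by ring

lemma vf_norm_le {c : ℝ} (hc : 0 ≤ c) {n : ℕ} [NeZero n] (u : ZMod n → ℝ) :
    ‖vf c n u‖ ≤ (n : ℝ) ^ 2 * (4 * c) := by
  rw [pi_norm_le_iff_of_nonneg (by positivity)]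
  intro x
  rw [Real.norm_eq_abs]
  have key : ∀ r : ℝ, 0 ≤ c * psiAux r ∧ c * psiAux r ≤ c := fun r =>
    ⟨mul_nonneg hc (psiAux_nonneg r),
     by nlinarith [psiAux_le_one r, psiAux_nonneg r]⟩
  obtain ⟨a1, a2⟩ := key (c * u (x + 1))
  obtain ⟨b1, b2⟩ := key (c * u (x - 1))
  obtain ⟨d1, d2⟩ := key (c * u x)
  have hn2 : (0:ℝ) ≤ (n : ℝ) ^ 2 := by positivity
  unfold vf
  rw [abs_mul, abs_of_nonneg hn2]
  have : |c * psiAux (c * u (x + 1)) + c * psiAux (c * u (x - 1))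
      - 2 * (c * psiAux (c * u x))| ≤ 4 * c := by
    rw [abs_le]; constructor <;> linarith
  nlinarith

lemma exists_sol {c : ℝ} (hc : 0 ≤ c) {n : ℕ} [NeZero n] (u₀ : ZMod n → ℝ) (T : ℝ)
    (hT : 0 < T) : ∃ f : ℝ → ZMod n → ℝ, f 0 = u₀ ∧
      ∀ t ∈ Icc (0:ℝ) T, HasDerivWithinAt f (vf c n (f t)) (Icc 0 T) t := by
  have hpl : IsPicardLindelof (fun _ u => vf c n u) (tmin := 0) (tmax := T)
      ⟨0, ⟨le_refl 0, hT.le⟩⟩ u₀ (Real.toNNReal ((n : ℝ) ^ 2 * (4 * c) * T)) 0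
      (Real.toNNReal ((n : ℝ) ^ 2 * (4 * c)))
      (Real.toNNReal ((n : ℝ) ^ 2 * (4 * c ^ 2))) := by
    constructor
    · intro t _
      apply LipschitzWith.lipschitzOnWith
      apply LipschitzWith.of_dist_le_mul
      intro u v
      have hK : (Real.toNNReal ((n : ℝ) ^ 2 * (4 * c ^ 2)) : ℝ)
          = (n : ℝ) ^ 2 * (4 * c ^ 2) := Real.coe_toNNReal _ (by positivity)
      rw [hK]
      exact vf_dist_le hc u v
    · exact fun x _ => continuousOn_const
    · intro t _ x _
      rw [Real.coe_toNNReal _ (by positivity)]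
      exact vf_norm_le hc x
    · rw [Real.coe_toNNReal _ (by positivity), Real.coe_toNNReal _ (by positivity)]
      show _ * max (T - 0) (0 - 0) ≤ _ - ((0 : NNReal) : ℝ)
      rw [sub_zero, sub_zero, max_eq_left hT.le, NNReal.coe_zero, sub_zero]
  exact hpl.exists_eq_forall_mem_Icc_hasDerivWithinAt₀

/-- Invariance of nonnegativity for a scalar quantity whose derivative is nonnegative
whenever the quantity is nonpositive. -/
lemma nonneg_of_deriv_nonneg_of_nonpos {b : ℝ} (hb : 0 ≤ b) {w d : ℝ → ℝ}
    (hd : ∀ t ∈ Icc (0:ℝ) b, HasDerivWithinAt w (d t) (Icc 0 b) t)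
    (h0 : 0 ≤ w 0)
    (hpos : ∀ t ∈ Icc (0:ℝ) b, w t ≤ 0 → 0 ≤ d t) :
    ∀ t ∈ Icc (0:ℝ) b, 0 ≤ w t := by
  intro t₁ ht₁
  by_contra hneg
  push_neg at hneg
  have hcont : ContinuousOn w (Icc 0 b) := fun t ht => (hd t ht).continuousWithinAt
  set A : Set ℝ := Icc 0 t₁ ∩ w ⁻¹' Ici 0 with hAdef
  have hA0 : (0:ℝ) ∈ A := ⟨⟨le_refl 0, ht₁.1⟩, h0⟩
  have hclosed : IsClosed A :=
    (hcont.mono (Icc_subset_Icc_right ht₁.2)).preimage_isClosed_of_isClosed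
      isClosed_Icc isClosed_Ici
  have hbdd : BddAbove A := ⟨t₁, fun t ht => ht.1.2⟩
  set s := sSup A with hs
  have hsA : s ∈ A := hclosed.csSup_mem ⟨0, hA0⟩ hbdd
  have hs0 : 0 ≤ s := hsA.1.1
  have hst : s ≤ t₁ := hsA.1.2
  have hws : 0 ≤ w s := hsA.2
  have hslt : s < t₁ := by
    rcases lt_or_eq_of_le hst with h | h
    · exact h
    · exfalso; rw [h] at hws; linarith
  have hkey : ∀ t ∈ Ioc s t₁, w t ≤ 0 := by
    intro t ht
    by_contra hwt
    push_neg at hwt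
    have : t ∈ A := ⟨⟨hs0.trans ht.1.le, ht.2⟩, hwt.le⟩
    have := le_csSup hbdd this
    linarith [ht.1]
  have hmono : MonotoneOn w (Icc s t₁) := by
    apply monotoneOn_of_deriv_nonneg (convex_Icc s t₁)
    · exact hcont.mono (Icc_subset_Icc hs0 ht₁.2)
    · intro t ht
      rw [interior_Icc] at ht
      have htmem : t ∈ Icc 0 b := ⟨hs0.trans ht.1.le, ht.2.le.trans ht₁.2⟩
      have hnhds : Icc 0 b ∈ nhds t :=
        Icc_mem_nhds (lt_of_le_of_lt hs0 ht.1) (lt_of_lt_of_le ht.2 ht₁.2)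
      exact (((hd t htmem).hasDerivAt hnhds).differentiableAt).differentiableWithinAt
    · intro t ht
      rw [interior_Icc] at ht
      have htmem : t ∈ Icc 0 b := ⟨hs0.trans ht.1.le, ht.2.le.trans ht₁.2⟩
      have hnhds : Icc 0 b ∈ nhds t :=
        Icc_mem_nhds (lt_of_le_of_lt hs0 ht.1) (lt_of_lt_of_le ht.2 ht₁.2)
      rw [((hd t htmem).hasDerivAt hnhds).deriv]
      exact hpos t htmem (hkey t ⟨ht.1, ht.2.le⟩)
  have := hmono ⟨le_refl s, hslt.le⟩ ⟨hslt.le, le_refl t₁⟩ hslt.le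
  linarith

/-- for every nonnegative initial condition `u₀ : ℤ/nℤ → [0,∞)` there is a
unique global solution of the discrete scheme `(d/dt) u_t(x) = Δ_n(φ_n ∘ u_t)(x)` on
`[0,∞)` with `u_0 = u₀`, taking values in `[0,∞)`. -/
theorem discrete_scheme_global_existence_uniqueness
    (α : ℝ) (hα : 0 ≤ α) (n : ℕ) [NeZero n]
    (u₀ : ZMod n → ℝ) (h₀ : ∀ x, 0 ≤ u₀ x) :
    ∃ u : ℝ → ZMod n → ℝ,
      (u 0 = u₀ ∧ (∀ t, 0 ≤ t → ∀ x, 0 ≤ u t x) ∧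
        ∀ t, 0 ≤ t → ∀ x : ZMod n,
          HasDerivWithinAt (fun s => u s x)
            (discLap n (fun y => phin α n (u t y)) x) (Set.Ici 0) t) ∧
      ∀ v : ℝ → ZMod n → ℝ,
        (v 0 = u₀ ∧ (∀ t, 0 ≤ t → ∀ x, 0 ≤ v t x) ∧
          ∀ t, 0 ≤ t → ∀ x : ZMod n,
            HasDerivWithinAt (fun s => v s x)
              (discLap n (fun y => phin α n (v t y)) x) (Set.Ici 0) t) →
        ∀ t, 0 ≤ t → v t = u t := by
  have hc : (0:ℝ) ≤ (n : ℝ) ^ α := Real.rpow_nonneg (Nat.cast_nonneg n) α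
  -- family of local solutions
  have hex : ∀ k : ℕ, ∃ f : ℝ → ZMod n → ℝ, f 0 = u₀ ∧
      ∀ t ∈ Icc (0:ℝ) ((k:ℝ) + 1),
        HasDerivWithinAt f (vf ((n : ℝ) ^ α) n (f t)) (Icc 0 ((k:ℝ) + 1)) t :=
    fun k => exists_sol hc u₀ _ (by positivity)
  choose F hF0 hFd using hex
  -- the Lipschitz field
  have hlip : ∀ t : ℝ, LipschitzOnWith (Real.toNNReal ((n : ℝ) ^ 2 * (4 * ((n : ℝ) ^ α) ^ 2)))
      ((fun (_ : ℝ) (u : ZMod n → ℝ) => vf ((n : ℝ) ^ α) n u) t)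
      ((fun (_ : ℝ) => (univ : Set (ZMod n → ℝ))) t) := by
    intro t
    apply LipschitzWith.lipschitzOnWith
    apply LipschitzWith.of_dist_le_mul
    intro u v
    rw [Real.coe_toNNReal _ (by positivity)]
    exact vf_dist_le hc u v
  -- nonnegativity of each local solution
  have hFnn : ∀ k : ℕ, ∀ t ∈ Icc (0:ℝ) ((k:ℝ) + 1), ∀ x, 0 ≤ F k t x := by
    intro k t ht x
    refine nonneg_of_deriv_nonneg_of_nonpos (b := (k:ℝ) + 1) (by positivity)
      (w := fun s => F k s x) (d := fun s => vf ((n : ℝ) ^ α) n (F k s) x)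
      (fun s hs => hasDerivWithinAt_pi.1 (hFd k s hs) x) ?_
      (fun s _ hws => vf_nonneg_of_nonpos hc hws) t ht
    show 0 ≤ F k 0 x
    rw [hF0 k]
    exact h₀ x
  -- consistency of the local solutions
  have hcons : ∀ j k : ℕ, j ≤ k → ∀ t ∈ Icc (0:ℝ) ((j:ℝ) + 1), F j t = F k t := by
    intro j k hjk
    have hb : ((j:ℝ) + 1) ≤ ((k:ℝ) + 1) := by
      have : (j:ℝ) ≤ (k:ℝ) := Nat.cast_le.2 hjk
      linarith
    have hfc : ContinuousOn (F j) (Icc 0 ((j:ℝ) + 1)) :=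
      fun t ht => (hFd j t ht).continuousWithinAt
    have hgc : ContinuousOn (F k) (Icc 0 ((j:ℝ) + 1)) := fun t ht =>
      ((hFd k t ⟨ht.1, ht.2.trans hb⟩).continuousWithinAt).mono (Icc_subset_Icc_right hb)
    have hfd' : ∀ t ∈ Ico (0:ℝ) ((j:ℝ) + 1),
        HasDerivWithinAt (F j) (vf ((n : ℝ) ^ α) n (F j t)) (Ici t) t := by
      intro t ht
      apply (hFd j t ⟨ht.1, ht.2.le⟩).mono_of_mem_nhdsWithin
      apply Filter.mem_of_superset (inter_mem_nhdsWithin (Ici t) (Iic_mem_nhds ht.2))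
      exact fun s hs => ⟨ht.1.trans hs.1, hs.2⟩
    have hgd' : ∀ t ∈ Ico (0:ℝ) ((j:ℝ) + 1),
        HasDerivWithinAt (F k) (vf ((n : ℝ) ^ α) n (F k t)) (Ici t) t := by
      intro t ht
      apply (hFd k t ⟨ht.1, ht.2.le.trans hb⟩).mono_of_mem_nhdsWithin
      apply Filter.mem_of_superset
        (inter_mem_nhdsWithin (Ici t) (Iic_mem_nhds (lt_of_lt_of_le ht.2 hb)))
      exact fun s hs => ⟨ht.1.trans hs.1, hs.2⟩
    exact fun t ht => ODE_solution_unique_of_mem_Icc_right (fun t _ => hlip t) hfc hfd'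
      (fun _ _ => mem_univ _) hgc hgd' (fun _ _ => mem_univ _)
      (by rw [hF0, hF0]) ht
  -- the global solution
  set uu : ℝ → ZMod n → ℝ := fun t => F ⌊t⌋₊ t with huu
  have hagree : ∀ k : ℕ, ∀ t ∈ Icc (0:ℝ) ((k:ℝ) + 1), uu t = F k t := by
    intro k t ht
    have htf : t ∈ Icc (0:ℝ) ((⌊t⌋₊:ℝ) + 1) := ⟨ht.1, (Nat.lt_floor_add_one t).le⟩
    rcases le_total (⌊t⌋₊) k with h | h
    · exact hcons _ _ h t htf
    · exact (hcons _ _ h t ht).symm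
  have huu0 : uu 0 = u₀ := by
    show F ⌊(0:ℝ)⌋₊ 0 = u₀
    rw [Nat.floor_zero]
    exact hF0 0
  have huunn : ∀ t, 0 ≤ t → ∀ x, 0 ≤ uu t x := fun t ht x =>
    hFnn ⌊t⌋₊ t ⟨ht, (Nat.lt_floor_add_one t).le⟩ x
  have huud : ∀ t, 0 ≤ t → HasDerivWithinAt uu (vf ((n : ℝ) ^ α) n (uu t)) (Ici 0) t := by
    intro t ht
    have htk : t < (⌊t⌋₊:ℝ) + 1 := Nat.lt_floor_add_one t
    have htmem : t ∈ Icc (0:ℝ) ((⌊t⌋₊:ℝ) + 1) := ⟨ht, htk.le⟩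
    have hmem : Icc (0:ℝ) ((⌊t⌋₊:ℝ) + 1) ∈ nhdsWithin t (Ici 0) := by
      rw [← Ici_inter_Iic]
      exact inter_mem_nhdsWithin _ (Iic_mem_nhds htk)
    have h1 := (hFd ⌊t⌋₊ t htmem).mono_of_mem_nhdsWithin hmem
    have h2 : uu =ᶠ[nhdsWithin t (Ici 0)] F ⌊t⌋₊ :=
      Filter.eventuallyEq_of_mem hmem (fun s hs => hagree ⌊t⌋₊ s hs)
    have h3 := h1.congr_of_eventuallyEq h2 (hagree ⌊t⌋₊ t htmem)
    rwa [hagree ⌊t⌋₊ t htmem]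
  refine ⟨uu, ⟨huu0, huunn, ?_⟩, ?_⟩
  · intro t ht x
    have h := hasDerivWithinAt_pi.1 (huud t ht) x
    rwa [vf_eq_discLap hα (huunn t ht) x] at h
  · rintro v ⟨hv0, hvnn, hvd⟩ t ht
    have hvec : ∀ s, 0 ≤ s → HasDerivWithinAt v (vf ((n : ℝ) ^ α) n (v s)) (Ici 0) s := by
      intro s hs
      apply hasDerivWithinAt_pi.2
      intro x
      have h := hvd s hs x
      rwa [← vf_eq_discLap hα (hvnn s hs) x] at h
    have htk : t < (⌊t⌋₊:ℝ) + 1 := Nat.lt_floor_add_one t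
    have hfc : ContinuousOn v (Icc 0 ((⌊t⌋₊:ℝ) + 1)) := fun s hs =>
      ((hvec s hs.1).continuousWithinAt).mono (fun y hy => hy.1)
    have hgc : ContinuousOn uu (Icc 0 ((⌊t⌋₊:ℝ) + 1)) := fun s hs =>
      ((huud s hs.1).continuousWithinAt).mono (fun y hy => hy.1)
    have hfd' : ∀ s ∈ Ico (0:ℝ) ((⌊t⌋₊:ℝ) + 1),
        HasDerivWithinAt v (vf ((n : ℝ) ^ α) n (v s)) (Ici s) s :=
      fun s hs => (hvec s hs.1).mono (Ici_subset_Ici.2 hs.1)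
    have hgd' : ∀ s ∈ Ico (0:ℝ) ((⌊t⌋₊:ℝ) + 1),
        HasDerivWithinAt uu (vf ((n : ℝ) ^ α) n (uu s)) (Ici s) s :=
      fun s hs => (huud s hs.1).mono (Ici_subset_Ici.2 hs.1)
    exact ODE_solution_unique_of_mem_Icc_right (fun t _ => hlip t) hfc hfd' (fun _ _ => mem_univ _)
      hgc hgd' (fun _ _ => mem_univ _) (by rw [hv0, huu0]) ⟨ht, htk.le⟩
end

section
/- Fix α ≥ 0 and a positive integer n. Let u, v : [0,∞) → (ℤ/nℤ → [0,∞)) be two solutions of the discrete scheme, i.e. for every x ∈ ℤ/nℤ the maps t ↦ u_t(x) and t ↦ v_t(x) are differentiable with (d/dt) u_t(x) = Δ_n(φ_n ∘ u_t)(x) and (d/dt) v_t(x) = Δ_n(φ_n ∘ v_t)(x) for all t ≥ 0. If u_0(x) ≤ v_0(x) for every x ∈ ℤ/nℤ, then u_t(x) ≤ v_t(x) for every t ≥ 0 and every x ∈ ℤ/nℤ (strong maximum principle / comparison principle). -/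
open Set Filter Real

lemma hasDerivAt_maxsq (y : ℝ) : HasDerivAt (fun z : ℝ => (max z 0)^2) (2 * max y 0) y := by
  rcases lt_trichotomy y 0 with h | h | h
  · have : HasDerivAt (fun _ : ℝ => (0:ℝ)) (2 * max y 0) y := by
      simpa [max_eq_right h.le] using (hasDerivAt_const y (0:ℝ))
    apply this.congr_of_eventuallyEq
    filter_upwards [eventually_lt_nhds h] with z hz
    simp [max_eq_right hz.le]
  · subst h
    rw [hasDerivAt_iff_isLittleO]
    simp only [max_self, mul_zero, smul_zero, sub_zero]
    have h1 : (fun z : ℝ => (max z 0)^2 - (max (0:ℝ) 0)^2) =O[nhds 0] (fun z => z * z) := by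
      apply Asymptotics.IsBigO.of_bound 1
      filter_upwards with z
      simp only [max_self, ne_eq, one_mul]
      rcases le_or_gt z 0 with hz | hz
      · simp [max_eq_right hz, abs_nonneg, sq_abs, ← sq]
        positivity
      · rw [max_eq_left hz.le]
        simp [← sq, sq_abs, abs_of_nonneg (sq_nonneg z)]
    have h2 : (fun z : ℝ => z * z) =o[nhds (0:ℝ)] fun z => z := by
      rw [Asymptotics.isLittleO_iff]
      intro c hc
      filter_upwards [Metric.ball_mem_nhds (0:ℝ) hc] with z hz
      rw [mem_ball_zero_iff, Real.norm_eq_abs] at hz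
      simp only [Real.norm_eq_abs, abs_mul]
      nlinarith [abs_nonneg z]
    have := h1.trans_isLittleO h2
    simpa using this
  · have : HasDerivAt (fun z : ℝ => z^2) (2 * max y 0) y := by
      simpa [max_eq_left h.le] using (hasDerivAt_pow 2 y)
    apply this.congr_of_eventuallyEq
    filter_upwards [eventually_gt_nhds h] with z hz
    simp [max_eq_left hz.le]

lemma phin_sub_eq {α : ℝ} {n : ℕ} (hn : (0:ℝ) < n) {a b : ℝ} (ha : 0 ≤ a) (hb : 0 ≤ b) :
    phin α n a - phin α n b =
      ((n:ℝ)^α)^2 * (a - b) / ((1 + (n:ℝ)^α * a) * (1 + (n:ℝ)^α * b)) := by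
  have hc : (0:ℝ) < (n:ℝ)^α := Real.rpow_pos_of_pos hn α
  have h1 : (0:ℝ) < 1 + (n:ℝ)^α * a := by positivity
  have h2 : (0:ℝ) < 1 + (n:ℝ)^α * b := by positivity
  unfold phin
  field_simp
  ring

lemma phin_sub_le {α : ℝ} {n : ℕ} (hn : (0:ℝ) < n) {a b : ℝ} (ha : 0 ≤ a) (hb : 0 ≤ b) :
    phin α n a - phin α n b ≤ ((n:ℝ)^α)^2 * max (a - b) 0 := by
  have hc : (0:ℝ) < (n:ℝ)^α := Real.rpow_pos_of_pos hn α
  have h1 : (0:ℝ) < 1 + (n:ℝ)^α * a := by positivity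
  have h2 : (0:ℝ) < 1 + (n:ℝ)^α * b := by positivity
  rw [phin_sub_eq hn ha hb]
  rcases le_or_gt a b with h | h
  · have : ((n:ℝ)^α)^2 * (a - b) / ((1 + (n:ℝ)^α * a) * (1 + (n:ℝ)^α * b)) ≤ 0 := by
      apply div_nonpos_of_nonpos_of_nonneg
      · nlinarith
      · positivity
    exact this.trans (by positivity)
  · rw [max_eq_left (by linarith)]
    rw [div_le_iff₀ (by positivity)]
    have hD : (1:ℝ) ≤ (1 + (n:ℝ)^α * a) * (1 + (n:ℝ)^α * b) := by
      nlinarith [mul_nonneg (mul_nonneg hc.le ha) (mul_nonneg hc.le hb),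
        mul_nonneg hc.le ha, mul_nonneg hc.le hb]
    have hX : 0 ≤ ((n:ℝ)^α)^2 * (a - b) := by
      have : 0 ≤ a - b := by linarith
      positivity
    exact le_mul_of_one_le_right hX hD

lemma phin_mono {α : ℝ} {n : ℕ} (hn : (0:ℝ) < n) {a b : ℝ} (ha : 0 ≤ a) (hb : 0 ≤ b)
    (hab : b ≤ a) : phin α n b ≤ phin α n a := by
  have h1 : (0:ℝ) < 1 + (n:ℝ)^α * a := by positivity
  have h2 : (0:ℝ) < 1 + (n:ℝ)^α * b := by positivity
  have heq := phin_sub_eq (α := α) hn ha hb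
  have hnum : 0 ≤ ((n:ℝ)^α)^2 * (a - b) / ((1 + (n:ℝ)^α * a) * (1 + (n:ℝ)^α * b)) := by
    apply div_nonneg _ (by positivity)
    have : 0 ≤ a - b := by linarith
    positivity
  linarith

/-- strong maximum / comparison principle: if `u, v` are two nonnegative
solutions of the discrete scheme `(d/dt) u_t(x) = Δ_n(φ_n ∘ u_t)(x)` on `[0,∞)` with
`u_0 ≤ v_0` pointwise, then `u_t(x) ≤ v_t(x)` for all `t ≥ 0` and all `x`. -/
theorem discrete_scheme_comparison_principle
    (α : ℝ) (hα : 0 ≤ α) (n : ℕ) [NeZero n]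
    (u v : ℝ → ZMod n → ℝ)
    (hu0 : ∀ t, 0 ≤ t → ∀ x, 0 ≤ u t x)
    (hv0 : ∀ t, 0 ≤ t → ∀ x, 0 ≤ v t x)
    (hu : ∀ t, 0 ≤ t → ∀ x : ZMod n,
      HasDerivWithinAt (fun s => u s x)
        (discLap n (fun y => phin α n (u t y)) x) (Set.Ici 0) t)
    (hv : ∀ t, 0 ≤ t → ∀ x : ZMod n,
      HasDerivWithinAt (fun s => v s x)
        (discLap n (fun y => phin α n (v t y)) x) (Set.Ici 0) t)
    (hinit : ∀ x, u 0 x ≤ v 0 x) :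
    ∀ t, 0 ≤ t → ∀ x, u t x ≤ v t x := by
  have hn : (0:ℝ) < n := Nat.cast_pos.mpr (Nat.pos_of_ne_zero (NeZero.ne n))
  set c2 : ℝ := ((n:ℝ)^α)^2 with hc2def
  have hc2 : 0 ≤ c2 := sq_nonneg _
  set p : ℝ → ZMod n → ℝ := fun t x => max (u t x - v t x) 0 with hp_def
  have hp : ∀ t x, 0 ≤ p t x := fun t x => le_max_right _ _
  set f : ℝ → ℝ := fun t => ∑ x : ZMod n, (p t x)^2 with hf_def
  set f' : ℝ → ℝ := fun t => ∑ x : ZMod n, 2 * p t x *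
    (discLap n (fun y => phin α n (u t y)) x - discLap n (fun y => phin α n (v t y)) x)
    with hf'_def
  set K : ℝ := 4 * (n:ℝ)^2 * c2 with hK_def
  have hderiv : ∀ t, 0 ≤ t → HasDerivWithinAt f (f' t) (Set.Ici 0) t := by
    intro t ht
    apply HasDerivWithinAt.fun_sum
    intro x _
    have hw : HasDerivWithinAt (fun s => u s x - v s x)
        (discLap n (fun y => phin α n (u t y)) x - discLap n (fun y => phin α n (v t y)) x)
        (Set.Ici 0) t := (hu t ht x).sub (hv t ht x)
    have := (hasDerivAt_maxsq (u t x - v t x)).comp_hasDerivWithinAt t hw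
    simpa [Function.comp_def, hp_def] using this
  -- the key pointwise bound
  have hbound : ∀ t ∈ Ico (0:ℝ) t, True := fun _ _ => trivial
  intro T hT x₀
  have hcont : ContinuousOn f (Icc 0 T) := fun t ht =>
    ((hderiv t ht.1).continuousWithinAt).mono Icc_subset_Ici_self
  have hslope : ∀ t ∈ Ico (0:ℝ) T, ∀ r, f' t < r →
      ∃ᶠ z in nhdsWithin t (Ioi t), (z - t)⁻¹ * (f z - f t) < r := by
    intro t ht r hr
    have h := ((hderiv t ht.1).mono (Ici_subset_Ici.mpr ht.1)).liminf_right_slope_le hr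
    apply h.mono
    intro z hz
    rwa [slope_def_field, div_eq_inv_mul] at hz
  have hf0 : f 0 ≤ 0 := by
    apply le_of_eq
    apply Finset.sum_eq_zero
    intro x _
    rw [hp_def]
    simp only
    rw [max_eq_right (sub_nonpos.mpr (hinit x))]
    simp
  have hKbound : ∀ t ∈ Ico (0:ℝ) T, f' t ≤ K * f t + 0 := by
    intro t ht
    rw [add_zero]
    have key : ∀ x : ZMod n, 2 * p t x *
        (discLap n (fun y => phin α n (u t y)) x - discLap n (fun y => phin α n (v t y)) x)
        ≤ (n:ℝ)^2 * c2 * (2 * (p t x)^2 + (p t (x+1))^2 + (p t (x-1))^2) := by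
      intro x
      have hg1 : phin α n (u t (x+1)) - phin α n (v t (x+1)) ≤ c2 * p t (x+1) :=
        phin_sub_le hn (hu0 t ht.1 _) (hv0 t ht.1 _)
      have hg2 : phin α n (u t (x-1)) - phin α n (v t (x-1)) ≤ c2 * p t (x-1) :=
        phin_sub_le hn (hu0 t ht.1 _) (hv0 t ht.1 _)
      have hg0 : 0 ≤ p t x * (phin α n (u t x) - phin α n (v t x)) := by
        rcases le_or_gt (u t x - v t x) 0 with h | h
        · have : p t x = 0 := by rw [hp_def]; simp only; rw [max_eq_right h]
          rw [this, zero_mul]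
        · have hm := phin_mono (α := α) hn (hu0 t ht.1 x) (hv0 t ht.1 x) (by linarith)
          exact mul_nonneg (hp t x) (by linarith)
      have hlap : discLap n (fun y => phin α n (u t y)) x - discLap n (fun y => phin α n (v t y)) x
          = (n:ℝ)^2 * ((phin α n (u t (x+1)) - phin α n (v t (x+1)))
            + (phin α n (u t (x-1)) - phin α n (v t (x-1)))
            - 2 * (phin α n (u t x) - phin α n (v t x))) := by
        unfold discLap; ring
      rw [hlap]
      have inner : 2 * p t x * ((phin α n (u t (x+1)) - phin α n (v t (x+1)))
            + (phin α n (u t (x-1)) - phin α n (v t (x-1)))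
            - 2 * (phin α n (u t x) - phin α n (v t x)))
          ≤ c2 * (2 * (p t x)^2 + (p t (x+1))^2 + (p t (x-1))^2) := by
        nlinarith [mul_le_mul_of_nonneg_left hg1 (hp t x),
          mul_le_mul_of_nonneg_left hg2 (hp t x),
          mul_nonneg hc2 (sq_nonneg (p t x - p t (x+1))),
          mul_nonneg hc2 (sq_nonneg (p t x - p t (x-1))), hg0]
      have hn2 : (0:ℝ) ≤ (n:ℝ)^2 := sq_nonneg _
      calc 2 * p t x * ((n:ℝ)^2 * ((phin α n (u t (x+1)) - phin α n (v t (x+1)))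
            + (phin α n (u t (x-1)) - phin α n (v t (x-1)))
            - 2 * (phin α n (u t x) - phin α n (v t x))))
          = (n:ℝ)^2 * (2 * p t x * ((phin α n (u t (x+1)) - phin α n (v t (x+1)))
            + (phin α n (u t (x-1)) - phin α n (v t (x-1)))
            - 2 * (phin α n (u t x) - phin α n (v t x)))) := by ring
        _ ≤ (n:ℝ)^2 * (c2 * (2 * (p t x)^2 + (p t (x+1))^2 + (p t (x-1))^2)) :=
            mul_le_mul_of_nonneg_left inner hn2
        _ = (n:ℝ)^2 * c2 * (2 * (p t x)^2 + (p t (x+1))^2 + (p t (x-1))^2) := by ring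
    have e1 : ∑ x : ZMod n, (p t (x+1))^2 = ∑ x : ZMod n, (p t x)^2 :=
      Fintype.sum_equiv (Equiv.addRight (1 : ZMod n)) _ _ (fun x => rfl)
    have e2 : ∑ x : ZMod n, (p t (x-1))^2 = ∑ x : ZMod n, (p t x)^2 :=
      Fintype.sum_equiv (Equiv.subRight (1 : ZMod n)) _ _ (fun x => rfl)
    calc f' t ≤ ∑ x : ZMod n, (n:ℝ)^2 * c2 * (2 * (p t x)^2 + (p t (x+1))^2 + (p t (x-1))^2) :=
          Finset.sum_le_sum (fun x _ => key x)
      _ = (n:ℝ)^2 * c2 * (2 * (∑ x : ZMod n, (p t x)^2) + (∑ x : ZMod n, (p t (x+1))^2)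
            + (∑ x : ZMod n, (p t (x-1))^2)) := by
          rw [← Finset.mul_sum]
          congr 1
          rw [Finset.sum_add_distrib, Finset.sum_add_distrib, ← Finset.mul_sum]
      _ = K * f t := by rw [e1, e2, hf_def, hK_def]; ring
  have hgron := le_gronwallBound_of_liminf_deriv_right_le hcont hslope hf0 hKbound
    T (right_mem_Icc.mpr hT)
  rw [gronwallBound_ε0_δ0] at hgron
  have hsingle : (p T x₀)^2 ≤ f T :=
    Finset.single_le_sum (fun x _ => sq_nonneg (p T x)) (Finset.mem_univ x₀)
  have hpz : p T x₀ = 0 := by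
    have : (p T x₀)^2 ≤ 0 := hsingle.trans hgron
    nlinarith [hp T x₀]
  have : u T x₀ - v T x₀ ≤ 0 := by
    have h := le_max_left (u T x₀ - v T x₀) 0
    rw [hp_def] at hpz
    simp only at hpz
    rw [hpz] at h
    exact h
  linarith
end

section
/- Fix α ≥ 0 and a positive integer n. Let u : [0,∞) → (ℤ/nℤ → [0,∞)) be a solution of the discrete scheme, i.e. for every x ∈ ℤ/nℤ the map t ↦ u_t(x) is differentiable with (d/dt) u_t(x) = Δ_n(φ_n ∘ u_t)(x) for all t ≥ 0. Then the energy is non-increasing along the solution: for every t ≥ 0, ℰ_n(u_t) ≤ ℰ_n(u_0), where ℰ_n(w) = Σ_{x ∈ ℤ/nℤ} n·( φ_n(w(x+1)) − φ_n(w(x)) )². -/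
/-- The energy `ℰ_n(w) = Σ_x n (φ_n(w(x+1)) − φ_n(w(x)))²`. -/
noncomputable def energy (α : ℝ) (n : ℕ) [NeZero n] (w : ZMod n → ℝ) : ℝ :=
  ∑ x : ZMod n, (n : ℝ) * (phin α n (w (x + 1)) - phin α n (w x)) ^ 2

/-- Derivative of `phin`. -/
lemma phin_hasDerivAt (α : ℝ) (n : ℕ) (hn : 0 < n) (s : ℝ) (hs : 0 ≤ s) :
    HasDerivAt (phin α n)
      ((n : ℝ) ^ α * (n : ℝ) ^ α / (1 + (n : ℝ) ^ α * s) ^ 2) s := by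
  set c : ℝ := (n : ℝ) ^ α with hcdef
  have hc : 0 < c := Real.rpow_pos_of_pos (by exact_mod_cast hn) α
  have h1 : (0 : ℝ) < 1 + c * s := by positivity
  have hnum : HasDerivAt (fun u : ℝ => c * u) c s := by
    simpa using (hasDerivAt_id s).const_mul c
  have hden : HasDerivAt (fun u : ℝ => 1 + c * u) c s := by
    simpa using hnum.const_add 1
  have hdiv := (hnum.div hden h1.ne')
  have := hdiv.const_mul c
  refine this.congr_deriv ?_
  have h2 : c * (1 + c * s) - c * s * c = c := by ring
  rw [h2, mul_div_assoc]

/-- Summation by parts on `ZMod n`. -/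
lemma sum_by_parts {n : ℕ} [NeZero n] (a b : ZMod n → ℝ) :
    ∑ x : ZMod n, (a (x + 1) - a x) * (b (x + 1) - b x)
      = -∑ x : ZMod n, b x * (a (x + 1) + a (x - 1) - 2 * a x) := by
  have h1 : ∑ x : ZMod n, a (x + 1) * b (x + 1) = ∑ x : ZMod n, a x * b x :=
    Fintype.sum_equiv (Equiv.addRight (1 : ZMod n)) _ _ (fun x => rfl)
  have h2 : ∑ x : ZMod n, a x * b (x + 1) = ∑ x : ZMod n, a (x - 1) * b x :=
    Fintype.sum_equiv (Equiv.addRight (1 : ZMod n)) _ _ (fun x => by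
      simp [Equiv.coe_addRight, add_sub_cancel_right])
  have expand : ∀ x : ZMod n,
      (a (x + 1) - a x) * (b (x + 1) - b x) + b x * (a (x + 1) + a (x - 1) - 2 * a x)
        = (a (x + 1) * b (x + 1) - a x * b x) - (a x * b (x + 1) - a (x - 1) * b x) := by
    intro x; ring
  have key : ∑ x : ZMod n,
      ((a (x + 1) - a x) * (b (x + 1) - b x) + b x * (a (x + 1) + a (x - 1) - 2 * a x)) = 0 := by
    simp_rw [expand]
    rw [Finset.sum_sub_distrib, Finset.sum_sub_distrib, Finset.sum_sub_distrib, h1, h2]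
    ring
  rw [Finset.sum_add_distrib] at key
  linarith

/-- energy estimate: if `u` is a nonnegative solution of the discrete
scheme `(d/dt) u_t(x) = Δ_n(φ_n ∘ u_t)(x)` on `[0,∞)`, then the energy is non-increasing:
`ℰ_n(u_t) ≤ ℰ_n(u_0)` for every `t ≥ 0`. -/
theorem discrete_scheme_energy_estimate
    (α : ℝ) (hα : 0 ≤ α) (n : ℕ) [NeZero n]
    (u : ℝ → ZMod n → ℝ)
    (hpos : ∀ t, 0 ≤ t → ∀ x, 0 ≤ u t x)
    (hu : ∀ t, 0 ≤ t → ∀ x : ZMod n,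
      HasDerivWithinAt (fun s => u s x)
        (discLap n (fun y => phin α n (u t y)) x) (Set.Ici 0) t) :
    ∀ t, 0 ≤ t → energy α n (u t) ≤ energy α n (u 0) := by
  have hn : 0 < n := Nat.pos_of_ne_zero (NeZero.ne n)
  set c : ℝ := (n : ℝ) ^ α with hcdef
  set g : ℝ → ZMod n → ℝ := fun t x => phin α n (u t x) with hg
  set L : ℝ → ZMod n → ℝ := fun t x => discLap n (fun y => phin α n (u t y)) x with hL
  set d : ℝ → ZMod n → ℝ := fun t x => c * c / (1 + c * u t x) ^ 2 * L t x with hd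
  set E' : ℝ → ℝ := fun t =>
    ∑ x : ZMod n, (n : ℝ) * (2 * (g t (x + 1) - g t x) * (d t (x + 1) - d t x)) with hE'def
  -- derivative of the energy
  have hE : ∀ t, 0 ≤ t →
      HasDerivWithinAt (fun s => energy α n (u s)) (E' t) (Set.Ici 0) t := by
    intro t ht
    have hG : ∀ x : ZMod n,
        HasDerivWithinAt (fun s => phin α n (u s x)) (d t x) (Set.Ici 0) t := by
      intro x
      have h := (phin_hasDerivAt α n hn (u t x) (hpos t ht x)).comp_hasDerivWithinAt t (hu t ht x)
      exact h
    have hsum : HasDerivWithinAt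
        (fun s => ∑ x : ZMod n, (n : ℝ) * (phin α n (u s (x + 1)) - phin α n (u s x)) ^ 2)
        (∑ x : ZMod n,
          (n : ℝ) * ((2 : ℕ) * (phin α n (u t (x + 1)) - phin α n (u t x)) ^ (2 - 1)
            * (d t (x + 1) - d t x)))
        (Set.Ici 0) t :=
      HasDerivWithinAt.fun_sum (fun x _ => (((hG (x + 1)).sub (hG x)).pow 2).const_mul _)
    have heq : (fun s => energy α n (u s))
        = fun s => ∑ x : ZMod n, (n : ℝ) * (phin α n (u s (x + 1)) - phin α n (u s x)) ^ 2 := by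
      funext s; rfl
    rw [heq]
    convert hsum using 1
    rw [hE'def]
    refine Finset.sum_congr rfl fun x _ => ?_
    push_cast
    ring
  -- the derivative is nonpositive
  have hE'le : ∀ t, 0 ≤ t → E' t ≤ 0 := by
    intro t ht
    have hL_eq : ∀ x : ZMod n,
        g t (x + 1) + g t (x - 1) - 2 * g t x = L t x / (n : ℝ) ^ 2 := by
      intro x
      have hn2 : ((n : ℝ) ^ 2) ≠ 0 := by positivity
      rw [hL]
      simp only [discLap]
      field_simp
      rfl
    have hsbp := sum_by_parts (a := g t) (b := d t)
    have hfactor : E' t = 2 * (n : ℝ) *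
        ∑ x : ZMod n, (g t (x + 1) - g t x) * (d t (x + 1) - d t x) := by
      rw [hE'def, Finset.mul_sum]
      refine Finset.sum_congr rfl fun x _ => ?_
      ring
    rw [hfactor, hsbp]
    have hterm : ∀ x : ZMod n,
        0 ≤ d t x * (g t (x + 1) + g t (x - 1) - 2 * g t x) := by
      intro x
      rw [hL_eq x, hd]
      have h1 : (0 : ℝ) ≤ c * c / (1 + c * u t x) ^ 2 := by positivity
      have h2 : (0 : ℝ) ≤ L t x * (L t x / (n : ℝ) ^ 2) := by
        rw [mul_div_assoc']
        exact div_nonneg (mul_self_nonneg _) (by positivity)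
      calc (0:ℝ) ≤ (c * c / (1 + c * u t x) ^ 2) * (L t x * (L t x / (n : ℝ) ^ 2)) :=
            mul_nonneg h1 h2
        _ = c * c / (1 + c * u t x) ^ 2 * L t x * (L t x / (n : ℝ) ^ 2) := by ring
    have hsum_nonneg : 0 ≤ ∑ x : ZMod n, d t x * (g t (x + 1) + g t (x - 1) - 2 * g t x) :=
      Finset.sum_nonneg fun x _ => hterm x
    have hnn : (0 : ℝ) ≤ 2 * (n : ℝ) := by positivity
    nlinarith
  -- conclude by antitonicity
  have hanti : AntitoneOn (fun s => energy α n (u s)) (Set.Ici 0) := by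
    apply antitoneOn_of_hasDerivWithinAt_nonpos (convex_Ici 0)
      (f' := E')
    · intro x hx
      exact (hE x hx).continuousWithinAt
    · intro x hx
      rw [interior_Ici] at hx
      exact ((hE x (le_of_lt hx)).mono (by rw [interior_Ici]; exact Set.Ioi_subset_Ici_self))
    · intro x hx
      rw [interior_Ici] at hx
      exact hE'le x (le_of_lt hx)
  intro t ht
  exact hanti (Set.self_mem_Ici) ht ht
end
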